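/- arXiv:1404.4064 — 10 statements merged into one kernel-verified Lean document; each statement's English description precedes it below -/
import Mathlib

section
/- For every integer n ≥ 2, the combinatorial Grassmannian G(n+1,2) — whose points are the 2-element subsets of an (n+1)-element set X and whose lines are the triples of 2-subsets contained in a common 3-subset of X — is a configuration with binomial(n+1,2) points, binomial(n+1,3) lines, 3 points per line, and n-1 lines through each point, and it freely contains a complete graph K_n. -/
open Finset

/-- A partial Steiner triple system: a finite incidence structure given by its
set of lines (3-element subsets of the point set) such that two distinct
points lie on at most one common line. -/
structure PSTS (S : Type) where
  lines : Finset (Finset S)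
  card3 : ∀ L ∈ lines, L.card = 3
  unique : ∀ L₁ ∈ lines, ∀ L₂ ∈ lines, ∀ a b : S, a ≠ b →
    a ∈ L₁ → b ∈ L₁ → a ∈ L₂ → b ∈ L₂ → L₁ = L₂

/-- The rank of a point: the number of lines through it. -/
def pointRank {S : Type} [DecidableEq S] (M : PSTS S) (p : S) : ℕ :=
  (M.lines.filter (fun L => p ∈ L)).card

/-- A binomial B(m)-configuration: C(m,2) points, each of rank m-2, and C(m,3) lines. -/
def IsBinomial {S : Type} [Fintype S] [DecidableEq S] (M : PSTS S) (m : ℕ) : Prop :=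
  Fintype.card S = Nat.choose m 2 ∧ M.lines.card = Nat.choose m 3 ∧
    ∀ p : S, pointRank M p = m - 2

/-- `L` is a side of the complete graph on `X`: a line of `M` meeting `X` in
exactly two points (the extension of an edge of `K_X`). -/
def IsSide {S : Type} [DecidableEq S] (M : PSTS S) (X L : Finset S) : Prop :=
  L ∈ M.lines ∧ (L ∩ X).card = 2

instance {S : Type} [DecidableEq S] (M : PSTS S) (X L : Finset S) :
    Decidable (IsSide M X L) := by
  unfold IsSide; infer_instance

/-- The complete graph on the vertex set `X` is freely contained in `M`:
every edge of `K_X` extends to a (necessarily unique) line of `M` which meets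
`X` in exactly two points (hence distinct edges extend to distinct lines), and
two distinct sides never meet outside `X`. -/
def FreelyContains {S : Type} [DecidableEq S] (M : PSTS S) (X : Finset S) : Prop :=
  (∀ a ∈ X, ∀ b ∈ X, a ≠ b → ∃ L ∈ M.lines, a ∈ L ∧ b ∈ L ∧ (L ∩ X).card = 2) ∧
  (∀ L₁ L₂ : Finset S, IsSide M X L₁ → IsSide M X L₂ → L₁ ≠ L₂ →
    ∀ p, p ∈ L₁ → p ∈ L₂ → p ∈ X)

/-- `(Z,G)` is a B(m)-configuration regularly contained in `M` (a subspace):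
the lines of `G` are lines of `M` lying in `Z`, every line of `M` meeting `Z`
in at least two points belongs to `G`, and `(Z,G)` has the binomial B(m) parameters. -/
def RegularBinomialSub {S : Type} [DecidableEq S] (M : PSTS S)
    (Z : Finset S) (G : Finset (Finset S)) (m : ℕ) : Prop :=
  G ⊆ M.lines ∧ (∀ L ∈ G, L ⊆ Z) ∧
  (∀ L ∈ M.lines, 2 ≤ (L ∩ Z).card → L ∈ G) ∧
  Z.card = Nat.choose m 2 ∧ G.card = Nat.choose m 3 ∧
  ∀ p ∈ Z, (G.filter (fun L => p ∈ L)).card = m - 2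

/-- The lines of the combinatorial Grassmannian G(Y,2): triples of 2-subsets
of `Y` contained in a common 3-subset. -/
def GrasLines (Y : Type) [Fintype Y] [DecidableEq Y] :
    Finset (Finset {e : Finset Y // e.card = 2}) :=
  (Finset.univ.filter (fun f : Finset Y => f.card = 3)).image
    (fun f => Finset.univ.filter (fun e : {e : Finset Y // e.card = 2} => e.val ⊆ f))

/-- `M` freely contains exactly `m` complete `K_j`-graphs. -/
def ExactlyKGraphs {S : Type} [DecidableEq S] (M : PSTS S) (j m : ℕ) : Prop :=
  ∃ f : Fin m → Finset S, Function.Injective f ∧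
    (∀ i, (f i).card = j ∧ FreelyContains M (f i)) ∧
    (∀ X : Finset S, X.card = j → FreelyContains M X → ∃ i, X = f i)


section Aux
variable {Y : Type} [Fintype Y] [DecidableEq Y]

/-- points of the line determined by `f` -/
def ptsOf (Y : Type) [Fintype Y] [DecidableEq Y] (f : Finset Y) :
    Finset {e : Finset Y // e.card = 2} :=
  Finset.univ.filter (fun e : {e : Finset Y // e.card = 2} => e.val ⊆ f)

lemma mem_ptsOf {f : Finset Y} {e : {e : Finset Y // e.card = 2}} :
    e ∈ ptsOf Y f ↔ e.val ⊆ f := by simp [ptsOf]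

lemma card_ptsOf {f : Finset Y} (hf : f.card = 3) : (ptsOf Y f).card = 3 := by
  have h : (ptsOf Y f).card = (f.powersetCard 2).card := by
    apply card_bij (fun e _ => e.val)
    · intro a ha
      rw [mem_powersetCard]
      exact ⟨mem_ptsOf.mp ha, a.prop⟩
    · intro a _ b _ h
      exact Subtype.ext h
    · intro s hs
      rw [mem_powersetCard] at hs
      exact ⟨⟨s, hs.2⟩, mem_ptsOf.mpr hs.1, rfl⟩
  rw [h, card_powersetCard, hf]; rfl

/-- a 2-subset containing y equals {y, x} for some x ≠ y -/
lemma eq_pair {e : Finset Y} (he : e.card = 2) {y : Y} (hy : y ∈ e) :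
    ∃ x, x ≠ y ∧ e = {y, x} := by
  have h1 : (e.erase y).card = 1 := by rw [card_erase_of_mem hy, he]
  obtain ⟨x, hx⟩ := card_eq_one.mp h1
  have hxy : x ≠ y := (mem_erase.mp (hx ▸ mem_singleton_self x)).1
  refine ⟨x, hxy, ?_⟩
  have h2 : e = insert y (e.erase y) := (insert_erase hy).symm
  rw [h2, hx]

lemma union_eq {e₁ e₂ f : Finset Y} (h1 : e₁.card = 2) (h2 : e₂.card = 2)
    (hne : e₁ ≠ e₂) (hf : f.card = 3) (s1 : e₁ ⊆ f) (s2 : e₂ ⊆ f) :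
    f = e₁ ∪ e₂ := by
  have hci : (e₁ ∩ e₂).card ≤ 1 := by
    by_contra h
    push_neg at h
    have ha : e₁ ∩ e₂ = e₁ :=
      eq_of_subset_of_card_le inter_subset_left (by omega)
    have hb : e₁ ∩ e₂ = e₂ :=
      eq_of_subset_of_card_le inter_subset_right (by omega)
    exact hne (ha ▸ hb)
  have hu := card_union_add_card_inter e₁ e₂
  exact (eq_of_subset_of_card_le (union_subset s1 s2) (by omega)).symm

lemma ptsOf_inj {f g : Finset Y} (hf : f.card = 3) (hg : g.card = 3)
    (h : ptsOf Y f = ptsOf Y g) : f = g := by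
  have key : ∀ {a b : Finset Y}, a.card = 3 → ptsOf Y a = ptsOf Y b → a ⊆ b := by
    intro a b ha hab x hx
    have h1 : ((a.erase x)).card = 2 := by rw [card_erase_of_mem hx, ha]
    obtain ⟨y, hy⟩ := card_pos.mp (by omega : 0 < (a.erase x).card)
    have hyx : y ≠ x := (mem_erase.mp hy).1
    have hpair : ({x, y} : Finset Y).card = 2 := card_pair (Ne.symm hyx)
    have hsub : ({x, y} : Finset Y) ⊆ a := by
      intro z hz
      rcases mem_insert.mp hz with rfl | hz
      · exact hx
      · exact (erase_subset x a) (mem_singleton.mp hz ▸ hy)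
    have : (⟨{x, y}, hpair⟩ : {e : Finset Y // e.card = 2}) ∈ ptsOf Y b := by
      rw [← hab, mem_ptsOf]; exact hsub
    exact mem_ptsOf.mp this (mem_insert_self x {y})
  exact Subset.antisymm (key hf h) (key hg h.symm)

end Aux

/-- For n ≥ 2, the combinatorial Grassmannian G(n+1,2) is a
B(n+1)-configuration (C(n+1,2) points, C(n+1,3) lines, 3 points per line,
n-1 lines through each point) which freely contains a complete graph K_n. -/
theorem stmt_0 (n : ℕ) (hn : 2 ≤ n) (Y : Type) [Fintype Y] [DecidableEq Y]
    (hY : Fintype.card Y = n + 1) :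
    ∃ M : PSTS {e : Finset Y // e.card = 2},
      M.lines = GrasLines Y ∧ IsBinomial M (n + 1) ∧
      ∃ X : Finset {e : Finset Y // e.card = 2}, X.card = n ∧ FreelyContains M X := by
  classical
  set F3 : Finset (Finset Y) := Finset.univ.filter (fun f : Finset Y => f.card = 3) with hF3
  have hlines : GrasLines Y = F3.image (ptsOf Y) := rfl
  have hmemF3 : ∀ {f : Finset Y}, f ∈ F3 ↔ f.card = 3 := by
    intro f; simp [hF3]
  -- the PSTS
  refine ⟨⟨GrasLines Y, ?_, ?_⟩, rfl, ⟨?_, ?_, ?_⟩, ?_⟩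
  · -- card3
    intro L hL
    rw [hlines, mem_image] at hL
    obtain ⟨f, hf, rfl⟩ := hL
    exact card_ptsOf (hmemF3.mp hf)
  · -- unique
    intro L₁ h₁ L₂ h₂ a b hab ha1 hb1 ha2 hb2
    rw [hlines, mem_image] at h₁ h₂
    obtain ⟨f₁, hf₁, rfl⟩ := h₁
    obtain ⟨f₂, hf₂, rfl⟩ := h₂
    have hne : a.val ≠ b.val := fun h => hab (Subtype.ext h)
    have e₁ : f₁ = a.val ∪ b.val :=
      union_eq a.prop b.prop hne (hmemF3.mp hf₁) (mem_ptsOf.mp ha1) (mem_ptsOf.mp hb1)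
    have e₂ : f₂ = a.val ∪ b.val :=
      union_eq a.prop b.prop hne (hmemF3.mp hf₂) (mem_ptsOf.mp ha2) (mem_ptsOf.mp hb2)
    rw [show f₁ = f₂ from e₁.trans e₂.symm]
  · -- number of points
    rw [Fintype.card_finset_len, hY]
  · -- number of lines
    show (GrasLines Y).card = Nat.choose (n + 1) 3
    rw [hlines, card_image_of_injOn
      (fun f hf g hg h => ptsOf_inj (hmemF3.mp hf) (hmemF3.mp hg) h)]
    have : F3 = (Finset.univ : Finset Y).powersetCard 3 := by
      rw [powersetCard_eq_filter, powerset_univ]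
    rw [this, card_powersetCard, card_univ, hY]
  · -- point rank
    intro p
    show ((F3.image (ptsOf Y)).filter (fun L => p ∈ L)).card = (n + 1) - 2
    rw [filter_image, card_image_of_injOn (fun f hf g hg h =>
      ptsOf_inj (hmemF3.mp (mem_of_mem_filter f hf)) (hmemF3.mp (mem_of_mem_filter g hg)) h)]
    have hfe : F3.filter (fun f => p ∈ ptsOf Y f) = F3.filter (fun f => p.val ⊆ f) :=
      filter_congr (fun f _ => by rw [mem_ptsOf])
    rw [hfe]
    have hbij : (Finset.univ \ p.val).card = (F3.filter (fun f => p.val ⊆ f)).card := by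
      apply card_bij (fun y _ => insert y p.val)
      · intro y hy
        rw [mem_filter, hmemF3]
        have hyp : y ∉ p.val := (mem_sdiff.mp hy).2
        refine ⟨?_, subset_insert _ _⟩
        rw [card_insert_of_notMem hyp, p.prop]
      · intro y hy y' hy' h
        have : y ∈ insert y' p.val := h ▸ mem_insert_self y p.val
        rcases mem_insert.mp this with h' | h'
        · exact h'
        · exact absurd h' (mem_sdiff.mp hy).2
      · intro f hf
        rw [mem_filter] at hf
        obtain ⟨hf3, hpf⟩ := hf
        have hc : (f \ p.val).card = 1 := by
          rw [card_sdiff_of_subset hpf, hmemF3.mp hf3, p.prop]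
        obtain ⟨y, hy⟩ := card_eq_one.mp hc
        have hyf : y ∈ f \ p.val := hy ▸ mem_singleton_self y
        refine ⟨y, mem_sdiff.mpr ⟨mem_univ y, (mem_sdiff.mp hyf).2⟩, ?_⟩
        have := sdiff_union_of_subset hpf
        rw [hy] at this
        rw [insert_eq, this]
    rw [← hbij, card_sdiff_of_subset (subset_univ _), card_univ, hY, p.prop]
  · -- the K_n
    have hpos : 0 < Fintype.card Y := by omega
    obtain ⟨y₀⟩ := Fintype.card_pos_iff.mp hpos
    set X : Finset {e : Finset Y // e.card = 2} :=
      Finset.univ.filter (fun e => y₀ ∈ e.val) with hX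
    have hmemX : ∀ {e : {e : Finset Y // e.card = 2}}, e ∈ X ↔ y₀ ∈ e.val := by
      intro e; simp [hX]
    have hmemL : ∀ {L : Finset {e : Finset Y // e.card = 2}},
        L ∈ GrasLines Y ↔ ∃ f, f.card = 3 ∧ L = ptsOf Y f := by
      intro L
      rw [hlines, mem_image]
      constructor
      · rintro ⟨f, hf, rfl⟩; exact ⟨f, hmemF3.mp hf, rfl⟩
      · rintro ⟨f, hf, rfl⟩; exact ⟨f, hmemF3.mpr hf, rfl⟩
    refine ⟨X, ?_, ?_, ?_⟩
    · -- X.card = n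
      have hbij : (Finset.univ.erase y₀).card = X.card := by
        apply card_bij (fun u hu => (⟨{y₀, u},
          card_pair (fun h => (mem_erase.mp hu).1 h.symm)⟩ : {e : Finset Y // e.card = 2}))
        · intro u hu
          exact hmemX.mpr (mem_insert_self y₀ {u})
        · intro u hu u' hu' h
          have h' : ({y₀, u} : Finset Y) = {y₀, u'} := congrArg Subtype.val h
          have : u ∈ ({y₀, u'} : Finset Y) := h' ▸ mem_insert.mpr (Or.inr (mem_singleton_self u))
          rcases mem_insert.mp this with h'' | h''
          · exact absurd h'' (mem_erase.mp hu).1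
          · exact mem_singleton.mp h''
        · intro e he
          obtain ⟨x, hx, hex⟩ := eq_pair e.prop (hmemX.mp he)
          exact ⟨x, mem_erase.mpr ⟨hx, mem_univ x⟩, Subtype.ext hex.symm⟩
      rw [← hbij, card_erase_of_mem (mem_univ y₀), card_univ, hY]
      omega
    · -- edges extend
      intro a ha b hb hab
      obtain ⟨u, hu, hau⟩ := eq_pair a.prop (hmemX.mp ha)
      obtain ⟨v, hv, hbv⟩ := eq_pair b.prop (hmemX.mp hb)
      have huv : u ≠ v := by
        rintro rfl
        exact hab (Subtype.ext (hau.trans hbv.symm))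
      set f : Finset Y := {y₀, u, v} with hf
      have hy₀uv : y₀ ∉ ({u, v} : Finset Y) := by
        simp only [mem_insert, mem_singleton]
        push_neg
        exact ⟨fun h => hu h.symm, fun h => hv h.symm⟩
      have hf3 : f.card = 3 := by
        rw [hf, card_insert_of_notMem hy₀uv, card_pair huv]
      have hLmem : ptsOf Y f ∈ GrasLines Y := hmemL.mpr ⟨f, hf3, rfl⟩
      have haf : a.val ⊆ f := by
        rw [hau]
        intro z hz
        rcases mem_insert.mp hz with h | hz
        · rw [h]; exact mem_insert_self y₀ _
        · rw [mem_singleton.mp hz]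
          exact mem_insert.mpr (Or.inr (mem_insert_self u {v}))
      have hbf : b.val ⊆ f := by
        rw [hbv]
        intro z hz
        rcases mem_insert.mp hz with h | hz
        · rw [h]; exact mem_insert_self y₀ _
        · rw [mem_singleton.mp hz]
          exact mem_insert.mpr (Or.inr (mem_insert.mpr (Or.inr (mem_singleton_self v))))
      refine ⟨ptsOf Y f, hLmem, mem_ptsOf.mpr haf, mem_ptsOf.mpr hbf, ?_⟩
      have hinter : ptsOf Y f ∩ X = {a, b} := by
        ext e
        simp only [mem_inter, mem_insert, mem_singleton]
        constructor
        · rintro ⟨heL, heX⟩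
          obtain ⟨x, hx, hex⟩ := eq_pair e.prop (hmemX.mp heX)
          have hxf : x ∈ f := mem_ptsOf.mp heL (hex ▸ mem_insert.mpr (Or.inr (mem_singleton_self x)))
          rw [hf] at hxf
          rcases mem_insert.mp hxf with rfl | hxf'
          · exact absurd rfl hx
          rcases mem_insert.mp hxf' with rfl | hxf''
          · exact Or.inl (Subtype.ext (hex.trans hau.symm))
          · rw [mem_singleton.mp hxf'']  at hex
            exact Or.inr (Subtype.ext (hex.trans hbv.symm))
        · rintro (rfl | rfl)
          · exact ⟨mem_ptsOf.mpr haf, ha⟩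
          · exact ⟨mem_ptsOf.mpr hbf, hb⟩
      rw [hinter, card_pair hab]
    · -- free containment
      intro L₁ L₂ hS₁ hS₂ hL12 p hp1 hp2
      obtain ⟨f₁, hf₁3, rfl⟩ := hmemL.mp hS₁.1
      obtain ⟨f₂, hf₂3, rfl⟩ := hmemL.mp hS₂.1
      have hy₀f : ∀ (f : Finset Y), f.card = 3 → (ptsOf Y f ∩ X).card = 2 → y₀ ∈ f := by
        intro f hf3 hcard
        have h1 : 1 < (ptsOf Y f ∩ X).card := by omega
        obtain ⟨e₁, he₁, e₂, he₂, hne⟩ := one_lt_card.mp h1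
        have he₁' := mem_inter.mp he₁
        have he₂' := mem_inter.mp he₂
        have hunion : f = e₁.val ∪ e₂.val :=
          union_eq e₁.prop e₂.prop (fun h => hne (Subtype.ext h)) hf3
            (mem_ptsOf.mp he₁'.1) (mem_ptsOf.mp he₂'.1)
        rw [hunion]
        exact mem_union_left _ (hmemX.mp he₁'.2)
      have hy₁ := hy₀f f₁ hf₁3 hS₁.2
      have hy₂ := hy₀f f₂ hf₂3 hS₂.2
      by_contra hpX
      have hpy₀ : y₀ ∉ p.val := fun h => hpX (hmemX.mpr h)
      have key : ∀ (f : Finset Y), f.card = 3 → y₀ ∈ f → p ∈ ptsOf Y f →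
          p.val = f.erase y₀ := by
        intro f hf3 hy₀ hpf
        have hsub : p.val ⊆ f.erase y₀ := fun x hx =>
          mem_erase.mpr ⟨fun h => hpy₀ (h ▸ hx), mem_ptsOf.mp hpf hx⟩
        apply eq_of_subset_of_card_le hsub
        rw [card_erase_of_mem hy₀, hf3, p.prop]
      have h1 := key f₁ hf₁3 hy₁ hp1
      have h2 := key f₂ hf₂3 hy₂ hp2
      have : f₁ = f₂ := by
        rw [← insert_erase hy₁, ← insert_erase hy₂, ← h1, ← h2]
      exact hL12 (by rw [this])
end

section
/- Let M = (S,L) be a binomial B(n+1)-configuration (binomial(n+1,2) points of rank n-1, binomial(n+1,3) lines of size 3) that freely contains a complete graph K_X with |X| = n. Then the complement of K_X, i.e. the structure with points S∖X and lines L minus the sides of K_X, is a B(n)-configuration (binomial(n,2) points of rank n-2, binomial(n,3) lines) and is a subspace of M (every line of M meeting S∖X in at least two points lies entirely in S∖X). -/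
open Finset

/-- In a binomial B(n+1)-configuration freely containing K_X with
|X| = n, the complement of K_X (points S∖X, lines of M that are not sides of
K_X) is a B(n)-configuration and a subspace of M. -/
theorem stmt_2 (n : ℕ) (S : Type) [Fintype S] [DecidableEq S] (M : PSTS S)
    (hM : IsBinomial M (n + 1)) (X : Finset S) (hX : X.card = n)
    (hfree : FreelyContains M X)
    (Z : Finset S) (hZ : Z = Finset.univ \ X)
    (G : Finset (Finset S)) (hG : G = M.lines.filter (fun L => ¬ IsSide M X L)) :
    Z.card = Nat.choose n 2 ∧ G.card = Nat.choose n 3 ∧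
    (∀ L ∈ G, L ⊆ Z) ∧
    (∀ p ∈ Z, (G.filter (fun L => p ∈ L)).card = n - 2) ∧
    (∀ L ∈ M.lines, 2 ≤ (L ∩ Z).card → L ⊆ Z ∧ L ∈ G) := by
    classical
  obtain ⟨hcard, hlinescard, hrank⟩ := hM
  obtain ⟨hext, hmeet⟩ := hfree
  set Sd := M.lines.filter (fun L => IsSide M X L) with hSd
  -- number of sides = C(n,2)
  have hSdcard : Sd.card = Nat.choose n 2 := by
    have h2 : (X.powersetCard 2).card = Nat.choose n 2 := by
      rw [Finset.card_powersetCard, hX]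
    rw [← h2]
    apply Finset.card_bij (fun L _ => L ∩ X)
    · intro L hL
      rw [Finset.mem_powersetCard]
      exact ⟨Finset.inter_subset_right, (Finset.mem_filter.1 hL).2.2⟩
    · intro L₁ h₁ L₂ h₂ he
      obtain ⟨a, b, hab, habs⟩ := Finset.card_eq_two.1 (Finset.mem_filter.1 h₁).2.2
      have ha₁ : a ∈ L₁ ∩ X := by rw [habs]; simp
      have hb₁ : b ∈ L₁ ∩ X := by rw [habs]; simp
      have ha₂ : a ∈ L₂ ∩ X := by rw [← he, habs]; simp
      have hb₂ : b ∈ L₂ ∩ X := by rw [← he, habs]; simp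
      exact M.unique L₁ (Finset.mem_filter.1 h₁).1 L₂ (Finset.mem_filter.1 h₂).1 a b hab
        (Finset.mem_inter.1 ha₁).1 (Finset.mem_inter.1 hb₁).1
        (Finset.mem_inter.1 ha₂).1 (Finset.mem_inter.1 hb₂).1
    · intro e he
      rw [Finset.mem_powersetCard] at he
      obtain ⟨a, b, hab, habs⟩ := Finset.card_eq_two.1 he.2
      have haX : a ∈ X := he.1 (by rw [habs]; simp)
      have hbX : b ∈ X := he.1 (by rw [habs]; simp)
      obtain ⟨L, hL, haL, hbL, hLX⟩ := hext a haX b hbX hab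
      refine ⟨L, Finset.mem_filter.2 ⟨hL, hL, hLX⟩, ?_⟩
      have hsub : e ⊆ L ∩ X := by
        rw [habs]
        intro x hx
        rcases Finset.mem_insert.1 hx with h | h
        · subst h; exact Finset.mem_inter.2 ⟨haL, haX⟩
        · rw [Finset.mem_singleton.1 h]; exact Finset.mem_inter.2 ⟨hbL, hbX⟩
      exact (Finset.eq_of_subset_of_card_le hsub (by simp [hLX, he.2])).symm
  -- every point of X has exactly n-1 sides through it
  have key : ∀ a ∈ X, (Sd.filter (fun L => a ∈ L)).card = n - 1 := by
    intro a ha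
    have hXe : (X.erase a).card = n - 1 := by rw [Finset.card_erase_of_mem ha, hX]
    rw [← hXe]
    apply (Finset.card_bij (fun b hb =>
      (hext a ha b (Finset.mem_of_mem_erase hb) (Finset.ne_of_mem_erase hb).symm).choose) ?_ ?_ ?_).symm
    · intro b hb
      obtain ⟨hL, haL, hbL, hLX⟩ :=
        (hext a ha b (Finset.mem_of_mem_erase hb) (Finset.ne_of_mem_erase hb).symm).choose_spec
      exact Finset.mem_filter.2 ⟨Finset.mem_filter.2 ⟨hL, hL, hLX⟩, haL⟩
    · intro b₁ h₁ b₂ h₂ he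
      by_contra hne
      obtain ⟨hL, haL, hbL₁, hLX⟩ :=
        (hext a ha b₁ (Finset.mem_of_mem_erase h₁) (Finset.ne_of_mem_erase h₁).symm).choose_spec
      obtain ⟨hL', haL', hbL₂, hLX'⟩ :=
        (hext a ha b₂ (Finset.mem_of_mem_erase h₂) (Finset.ne_of_mem_erase h₂).symm).choose_spec
      rw [he] at hbL₁ hLX
      have hab₁ : a ≠ b₁ := (Finset.ne_of_mem_erase h₁).symm
      have hab₂ : a ≠ b₂ := (Finset.ne_of_mem_erase h₂).symm
      have hsub : ({a, b₁, b₂} : Finset S) ⊆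
          (hext a ha b₂ (Finset.mem_of_mem_erase h₂)
            (Finset.ne_of_mem_erase h₂).symm).choose ∩ X := by
        intro x hx
        simp only [Finset.mem_insert, Finset.mem_singleton] at hx
        rcases hx with h | h | h
        · subst h; exact Finset.mem_inter.2 ⟨haL', ha⟩
        · subst h; exact Finset.mem_inter.2 ⟨hbL₁, Finset.mem_of_mem_erase h₁⟩
        · subst h; exact Finset.mem_inter.2 ⟨hbL₂, Finset.mem_of_mem_erase h₂⟩
      have hc3 : ({a, b₁, b₂} : Finset S).card = 3 := by
        rw [Finset.card_insert_of_notMem (by simp [hab₁, hab₂]), Finset.card_pair hne]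
      have := Finset.card_le_card hsub
      rw [hc3, hLX'] at this
      omega
    · intro L hL
      obtain ⟨hLSd, haL⟩ := Finset.mem_filter.1 hL
      obtain ⟨hLlines, _, hLX⟩ := Finset.mem_filter.1 hLSd
      obtain ⟨x, y, hxy, hxys⟩ := Finset.card_eq_two.1 hLX
      have haLX : a ∈ L ∩ X := Finset.mem_inter.2 ⟨haL, ha⟩
      rw [hxys] at haLX
      simp only [Finset.mem_insert, Finset.mem_singleton] at haLX
      -- let c be the other point
      obtain ⟨c, hcne, hcmem⟩ : ∃ c, c ≠ a ∧ c ∈ L ∩ X := by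
        rcases haLX with h | h
        · exact ⟨y, by rw [h]; exact hxy.symm, by rw [hxys]; simp⟩
        · exact ⟨x, by rw [h]; exact hxy, by rw [hxys]; simp⟩
      obtain ⟨hcL, hcX⟩ := Finset.mem_inter.1 hcmem
      have hc' : c ∈ X.erase a := Finset.mem_erase.2 ⟨hcne, hcX⟩
      refine ⟨c, hc', ?_⟩
      obtain ⟨hL', haL', hcL', _⟩ :=
        (hext a ha c (Finset.mem_of_mem_erase hc') (Finset.ne_of_mem_erase hc').symm).choose_spec
      exact M.unique _ hL' L hLlines a c hcne.symm haL' hcL' haL hcL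
  -- every line through a point of X is a side
  have hXside : ∀ L ∈ M.lines, ∀ x, x ∈ X → x ∈ L → IsSide M X L := by
    intro L hL x hx hxL
    have h1 : Sd.filter (fun L => x ∈ L) ⊆ M.lines.filter (fun L => x ∈ L) :=
      Finset.filter_subset_filter _ (Finset.filter_subset _ _)
    have h2 : (M.lines.filter (fun L => x ∈ L)).card = n - 1 := by
      have := hrank x
      unfold pointRank at this
      omega
    have heq := Finset.eq_of_subset_of_card_le h1 (by simp [h2, key x hx])
    have : L ∈ Sd.filter (fun L => x ∈ L) := by
      rw [heq]; exact Finset.mem_filter.2 ⟨hL, hxL⟩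
    exact (Finset.mem_filter.1 (Finset.mem_filter.1 this).1).2
  -- lines of G avoid X
  have hGZ : ∀ L ∈ G, L ⊆ Z := by
    intro L hL p hp
    rw [hG, Finset.mem_filter] at hL
    rw [hZ, Finset.mem_sdiff]
    exact ⟨Finset.mem_univ _, fun hpX => hL.2 (hXside L hL.1 p hpX hp)⟩
  -- cardinalities
  have hZcard : Z.card = Nat.choose n 2 := by
    have hp : Nat.choose (n + 1) 2 = Nat.choose n 1 + Nat.choose n 2 := Nat.choose_succ_succ n 1
    rw [hZ, Finset.card_sdiff_of_subset (Finset.subset_univ X), Finset.card_univ, hcard, hX]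
    rw [Nat.choose_one_right] at hp
    omega
  have hGcard : G.card = Nat.choose n 3 := by
    have hsplit := Finset.card_filter_add_card_filter_not
      (s := M.lines) (p := fun L => IsSide M X L)
    have hp : Nat.choose (n + 1) 3 = Nat.choose n 2 + Nat.choose n 3 := Nat.choose_succ_succ n 2
    rw [← hSd] at hsplit
    rw [hG]
    omega
  -- each point of Z is on exactly one side
  have hone : ∀ p ∈ Z, (Sd.filter (fun L => p ∈ L)).card = 1 := by
    have hSdZ : ∀ L ∈ Sd, (Z.filter (fun p => p ∈ L)).card = 1 := by
      intro L hL
      obtain ⟨hLl, _, hLX⟩ := Finset.mem_filter.1 hL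
      have hZL : Z.filter (fun p => p ∈ L) = L \ X := by
        ext x; simp [hZ, and_comm]
      have hc := Finset.card_sdiff_add_card_inter L X
      rw [hZL]
      rw [M.card3 L hLl, hLX] at hc
      omega
    have hle : ∀ p ∈ Z, (Sd.filter (fun L => p ∈ L)).card ≤ 1 := by
      intro p hp
      rw [Finset.card_le_one]
      intro L₁ h₁ L₂ h₂
      by_contra hne
      obtain ⟨hS₁, hp₁⟩ := Finset.mem_filter.1 h₁
      obtain ⟨hS₂, hp₂⟩ := Finset.mem_filter.1 h₂
      have hpX := hmeet L₁ L₂ (Finset.mem_filter.1 hS₁).2 (Finset.mem_filter.1 hS₂).2 hne p hp₁ hp₂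
      rw [hZ, Finset.mem_sdiff] at hp
      exact hp.2 hpX
    have hsum : ∑ p ∈ Z, (Sd.filter (fun L => p ∈ L)).card = Z.card := by
      calc ∑ p ∈ Z, (Sd.filter (fun L => p ∈ L)).card
          = ∑ p ∈ Z, ∑ L ∈ Sd, if p ∈ L then 1 else 0 := by
            exact Finset.sum_congr rfl fun p _ => Finset.card_filter _ _
        _ = ∑ L ∈ Sd, ∑ p ∈ Z, if p ∈ L then 1 else 0 := Finset.sum_comm
        _ = ∑ L ∈ Sd, (Z.filter (fun p => p ∈ L)).card := by
            exact Finset.sum_congr rfl fun L _ => (Finset.card_filter _ _).symm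
        _ = ∑ L ∈ Sd, 1 := Finset.sum_congr rfl hSdZ
        _ = Sd.card := by rw [Finset.sum_const, smul_eq_mul, mul_one]
        _ = Z.card := by rw [hSdcard, hZcard]
    intro p hp
    by_contra hne
    have hlt : ∑ q ∈ Z, (Sd.filter (fun L => q ∈ L)).card < ∑ q ∈ Z, 1 := by
      apply Finset.sum_lt_sum hle
      exact ⟨p, hp, by have := hle p hp; omega⟩
    rw [hsum, Finset.sum_const, smul_eq_mul, mul_one] at hlt
    omega
  -- ranks in the complement
  have hrankZ : ∀ p ∈ Z, (G.filter (fun L => p ∈ L)).card = n - 2 := by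
    intro p hp
    have htot : (M.lines.filter (fun L => p ∈ L)).card = n - 1 := by
      have := hrank p
      unfold pointRank at this
      omega
    have hsplit := Finset.card_filter_add_card_filter_not
      (s := M.lines.filter (fun L => p ∈ L)) (p := fun L => IsSide M X L)
    have e1 : (M.lines.filter (fun L => p ∈ L)).filter (fun L => IsSide M X L)
        = Sd.filter (fun L => p ∈ L) := by
      rw [hSd, Finset.filter_filter, Finset.filter_filter]
      exact Finset.filter_congr (fun L _ => by tauto)
    have e2 : (M.lines.filter (fun L => p ∈ L)).filter (fun L => ¬ IsSide M X L)
        = G.filter (fun L => p ∈ L) := by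
      rw [hG, Finset.filter_filter, Finset.filter_filter]
      exact Finset.filter_congr (fun L _ => by tauto)
    rw [e1, e2, htot, hone p hp] at hsplit
    omega
  -- subspace property
  have hsub : ∀ L ∈ M.lines, 2 ≤ (L ∩ Z).card → L ⊆ Z ∧ L ∈ G := by
    intro L hL h2
    have hLG : L ∈ G := by
      rw [hG, Finset.mem_filter]
      refine ⟨hL, fun hside => ?_⟩
      have hLZ : L ∩ Z = L \ X := by ext x; simp [hZ]
      have hc := Finset.card_sdiff_add_card_inter L X
      rw [M.card3 L hL, hside.2] at hc
      rw [hLZ] at h2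
      omega
    exact ⟨hGZ L hLG, hLG⟩
  exact ⟨hZcard, hGcard, hGZ, hrankZ, hsub⟩
end

section
/- Let M = (S,L) be a binomial B(n+1)-configuration and let N = (Z,G) be a B(n)-configuration regularly contained in M (i.e., N is a subspace of M on point set Z ⊆ S). Then X = S∖Z has exactly n points, any two points of X are collinear in M via a line not in G, and these lines make X into a complete K_n-graph freely contained in M whose complement is N. -/
open Finset

/-- If a B(n)-configuration (Z,G) is regularly contained in a
binomial B(n+1)-configuration M, then X = S∖Z has exactly n points, any two of
them are collinear via a line not in G, these lines make X into a complete
K_n-graph freely contained in M, and the complement of K_X is (Z,G). -/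
theorem stmt_3 (n : ℕ) (S : Type) [Fintype S] [DecidableEq S] (M : PSTS S)
    (hM : IsBinomial M (n + 1)) (Z : Finset S) (G : Finset (Finset S))
    (hreg : RegularBinomialSub M Z G n)
    (X : Finset S) (hX : X = Finset.univ \ Z) :
    X.card = n ∧
    (∀ a ∈ X, ∀ b ∈ X, a ≠ b → ∃ L ∈ M.lines, L ∉ G ∧ a ∈ L ∧ b ∈ L) ∧
    FreelyContains M X ∧
    M.lines.filter (fun L => ¬ IsSide M X L) = G := by

  obtain ⟨hScard, hLcard, hrank⟩ := hM
  obtain ⟨hGsub, hGZ, hclose, hZcard, hGcard, hGrank⟩ := hreg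
  have hXmem : ∀ p : S, p ∈ X ↔ p ∉ Z := by intro p; simp [hX]
  have hXcard : X.card = n := by
    have h0 : X.card = Fintype.card S - Z.card := by
      rw [hX, card_sdiff_of_subset (subset_univ Z), Finset.card_univ]
    have h1 : Nat.choose (n + 1) 2 = Nat.choose n 1 + Nat.choose n 2 :=
      Nat.choose_succ_succ n 1
    have h2 : Nat.choose n 1 = n := Nat.choose_one_right n
    rw [h0, hScard, hZcard]; omega
  -- A line through a point of X meets Z in at most one point
  have hA : ∀ L ∈ M.lines, ∀ p, p ∈ X → p ∈ L → (L ∩ Z).card ≤ 1 := by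
    intro L hL p hpX hpL
    by_contra h
    push_neg at h
    have hLG : L ∈ G := hclose L hL (by omega)
    exact (hXmem p).1 hpX (hGZ L hLG hpL)
  have hA2 : ∀ L ∈ M.lines, ∀ p, p ∈ X → p ∈ L → 2 ≤ (L ∩ X).card := by
    intro L hL p hpX hpL
    have h3 : L.card = 3 := M.card3 L hL
    have hLX : L ∩ X = L \ Z := by
      rw [hX]; ext x; simp
    have hsplit : (L \ Z).card + (L ∩ Z).card = L.card :=
      card_sdiff_add_card_inter L Z
    have := hA L hL p hpX hpL
    rw [hLX]; omega
  have hnotG : ∀ L ∈ M.lines, ∀ p ∈ X, p ∈ L → L ∉ G := by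
    intro L hL p hp hpL hLG
    exact (hXmem p).1 hp (hGZ L hLG hpL)
  -- Key: any two points of X lie on a line meeting X in exactly two points
  have hB : ∀ p ∈ X, ∀ b ∈ X, p ≠ b →
      ∃ L ∈ M.lines, p ∈ L ∧ b ∈ L ∧ (L ∩ X).card = 2 := by
    intro p hp b hb hne
    set T := M.lines.filter (fun L => p ∈ L) with hT
    have hTcard : T.card = n - 1 := by
      have h := hrank p
      simp only [pointRank] at h
      rw [← hT] at h
      omega
    have hdisj : ∀ L1 ∈ T, ∀ L2 ∈ T, L1 ≠ L2 →
        Disjoint ((L1 ∩ X).erase p) ((L2 ∩ X).erase p) := by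
      intro L1 h1 L2 h2 hne12
      simp only [hT, mem_filter] at h1 h2
      rw [Finset.disjoint_left]
      intro q hq1 hq2
      simp only [mem_erase, mem_inter] at hq1 hq2
      exact hne12 (M.unique L1 h1.1 L2 h2.1 p q (Ne.symm hq1.1) h1.2 hq1.2.1
        h2.2 hq2.2.1)
    set U := T.biUnion (fun L => (L ∩ X).erase p) with hU
    have hUcard : U.card = ∑ L ∈ T, ((L ∩ X).erase p).card := card_biUnion hdisj
    have hUsub : U ⊆ X.erase p := by
      intro q hq
      simp only [hU, mem_biUnion] at hq
      obtain ⟨L, hL, hq⟩ := hq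
      simp only [mem_erase, mem_inter] at hq ⊢
      exact ⟨hq.1, hq.2.2⟩
    have hone : ∀ L ∈ T, 1 ≤ ((L ∩ X).erase p).card := by
      intro L hL
      simp only [hT, mem_filter] at hL
      have h2 := hA2 L hL.1 p hp hL.2
      have hpmem : p ∈ L ∩ X := mem_inter.2 ⟨hL.2, hp⟩
      have := Finset.card_erase_of_mem hpmem
      omega
    have hsum_ge : T.card ≤ ∑ L ∈ T, ((L ∩ X).erase p).card := by
      calc T.card = ∑ _L ∈ T, 1 := by simp
      _ ≤ _ := Finset.sum_le_sum hone
    have hXe : (X.erase p).card = n - 1 := by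
      rw [card_erase_of_mem hp, hXcard]
    have hUle : U.card ≤ n - 1 := hXe ▸ card_le_card hUsub
    have hUeq : U = X.erase p := eq_of_subset_of_card_le hUsub (by omega)
    have heach : ∀ L ∈ T, ((L ∩ X).erase p).card = 1 := by
      have hh : ∑ _L ∈ T, (1 : ℕ) = ∑ L ∈ T, ((L ∩ X).erase p).card := by
        have : ∑ _L ∈ T, (1 : ℕ) = T.card := by simp
        omega
      intro L hL
      exact ((Finset.sum_eq_sum_iff_of_le hone).1 hh L hL).symm
    have hbU : b ∈ U := by
      rw [hUeq]; exact mem_erase.2 ⟨Ne.symm hne, hb⟩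
    simp only [hU, mem_biUnion] at hbU
    obtain ⟨L, hLT, hbL⟩ := hbU
    have hLT' := hLT
    simp only [hT, mem_filter] at hLT'
    simp only [mem_erase, mem_inter] at hbL
    refine ⟨L, hLT'.1, hLT'.2, hbL.2.1, ?_⟩
    have hpmem : p ∈ L ∩ X := mem_inter.2 ⟨hLT'.2, hp⟩
    have h1 := heach L hLT
    have he := card_erase_of_mem hpmem
    have h2 := hA2 L hLT'.1 p hp hLT'.2
    omega
  -- The set of sides
  set Sd := M.lines.filter (fun L => (L ∩ X).card = 2) with hSd
  have hSdcard : Sd.card = Nat.choose n 2 := by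
    rw [← hXcard, ← Finset.card_powersetCard 2 X]
    apply Finset.card_bij (fun L _ => L ∩ X)
    · intro L hL
      simp only [hSd, mem_filter] at hL
      exact mem_powersetCard.2 ⟨inter_subset_right, hL.2⟩
    · intro L1 h1 L2 h2 heq
      simp only [hSd, mem_filter] at h1 h2
      obtain ⟨a, b, hab, hLX⟩ := Finset.card_eq_two.1 h1.2
      have ha1 : a ∈ L1 ∩ X := by rw [hLX]; simp
      have hb1 : b ∈ L1 ∩ X := by rw [hLX]; simp
      have ha2 : a ∈ L2 ∩ X := by rw [← heq, hLX]; simp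
      have hb2 : b ∈ L2 ∩ X := by rw [← heq, hLX]; simp
      exact M.unique L1 h1.1 L2 h2.1 a b hab (mem_inter.1 ha1).1
        (mem_inter.1 hb1).1 (mem_inter.1 ha2).1 (mem_inter.1 hb2).1
    · intro e he
      rw [mem_powersetCard] at he
      obtain ⟨a, b, hab, hee⟩ := Finset.card_eq_two.1 he.2
      have haX : a ∈ X := he.1 (by rw [hee]; simp)
      have hbX : b ∈ X := he.1 (by rw [hee]; simp)
      obtain ⟨L, hL, haL, hbL, hc2⟩ := hB a haX b hbX hab
      refine ⟨L, ?_, ?_⟩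
      · simp only [hSd, mem_filter]; exact ⟨hL, hc2⟩
      · have hsub : e ⊆ L ∩ X := by
          rw [hee]; intro x hx
          simp only [mem_insert, mem_singleton] at hx
          rcases hx with rfl | rfl
          · exact mem_inter.2 ⟨haL, haX⟩
          · exact mem_inter.2 ⟨hbL, hbX⟩
        exact (eq_of_subset_of_card_le hsub (by omega)).symm
  have hSdG_disj : Disjoint Sd G := by
    rw [Finset.disjoint_left]
    intro L hLSd hLG
    simp only [hSd, mem_filter] at hLSd
    have hempty : L ∩ X = ∅ := by
      rw [hX]
      ext x
      simp only [mem_inter, mem_sdiff, mem_univ, true_and, notMem_empty,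
        iff_false, not_and, not_not]
      intro hxL
      by_contra hxZ
      exact hxZ (hGZ L hLG hxL)
    rw [hempty] at hLSd
    simp at hLSd
  have hunion : Sd ∪ G = M.lines := by
    apply eq_of_subset_of_card_le
    · exact union_subset (filter_subset _ _) hGsub
    · rw [card_union_of_disjoint hSdG_disj, hSdcard, hGcard, hLcard]
      have h : Nat.choose (n + 1) 3 = Nat.choose n 2 + Nat.choose n 3 :=
        Nat.choose_succ_succ n 2
      omega
  have hfilter : M.lines.filter (fun L => ¬ IsSide M X L) = G := by
    ext L
    simp only [mem_filter]; simp only [IsSide]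
    constructor
    · rintro ⟨hL, hns⟩
      have hm : L ∈ Sd ∪ G := hunion ▸ hL
      rcases mem_union.1 hm with h | h
      · simp only [hSd, mem_filter] at h
        exact absurd ⟨hL, h.2⟩ hns
      · exact h
    · intro hLG
      refine ⟨hGsub hLG, ?_⟩
      rintro ⟨hL, h2⟩
      have hm : L ∈ Sd := by simp only [hSd, mem_filter]; exact ⟨hL, h2⟩
      exact (Finset.disjoint_right.1 hSdG_disj hLG) hm
  have hfree2 : ∀ L₁ L₂ : Finset S, IsSide M X L₁ → IsSide M X L₂ → L₁ ≠ L₂ →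
      ∀ p, p ∈ L₁ → p ∈ L₂ → p ∈ X := by
    intro L1 L2 h1 h2 hne p hp1 hp2
    by_contra hpX
    have hpZ : p ∈ Z := by
      by_contra hpZ
      exact hpX ((hXmem p).2 hpZ)
    have hrk := hrank p
    simp only [pointRank] at hrk
    have hfl : M.lines.filter (fun L => p ∈ L)
        = Sd.filter (fun L => p ∈ L) ∪ G.filter (fun L => p ∈ L) := by
      rw [← filter_union, hunion]
    have hdisj2 : Disjoint (Sd.filter (fun L => p ∈ L))
        (G.filter (fun L => p ∈ L)) :=
      hSdG_disj.mono (filter_subset _ _) (filter_subset _ _)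
    have hcard : (M.lines.filter (fun L => p ∈ L)).card
        = (Sd.filter (fun L => p ∈ L)).card
          + (G.filter (fun L => p ∈ L)).card := by
      rw [hfl, card_union_of_disjoint hdisj2]
    have hGp := hGrank p hpZ
    have h2le : 1 < (Sd.filter (fun L => p ∈ L)).card := by
      apply Finset.one_lt_card.2
      refine ⟨L1, ?_, L2, ?_, hne⟩ <;> simp only [hSd, mem_filter]
      · exact ⟨⟨h1.1, h1.2⟩, hp1⟩
      · exact ⟨⟨h2.1, h2.2⟩, hp2⟩
    omega
  refine ⟨hXcard, ?_, ⟨?_, hfree2⟩, hfilter⟩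
  · intro a ha b hb hab
    obtain ⟨L, hL, haL, hbL, hc2⟩ := hB a ha b hb hab
    exact ⟨L, hL, hnotG L hL a ha haL, haL, hbL⟩
  · intro a ha b hb hab
    exact hB a ha b hb hab
end

section
/- A binomial B(n+1)-configuration M freely contains a complete graph K_n if and only if M regularly contains a B(n)-subconfiguration as a subspace. -/
open Finset

/-- In a 2-element set containing `a`, any two members different from `a` coincide. -/
lemma two_mem_eq {S : Type} [DecidableEq S] {A : Finset S} (h : A.card = 2)
    {a b c : S} (ha : a ∈ A) (hb : b ∈ A) (hc : c ∈ A) (hba : b ≠ a) (hca : c ≠ a) :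
    b = c := by
  obtain ⟨x, y, hxy, rfl⟩ := Finset.card_eq_two.mp h
  simp only [Finset.mem_insert, Finset.mem_singleton] at ha hb hc
  rcases ha with rfl | rfl <;> rcases hb with rfl | rfl <;> rcases hc with rfl | rfl <;> tauto

/-- Lines with the same 2-element trace on a set are equal. -/
lemma trace_inj {S : Type} [DecidableEq S] (M : PSTS S) {X L₁ L₂ : Finset S}
    (h₁ : L₁ ∈ M.lines) (h₂ : L₂ ∈ M.lines) (hc : (L₁ ∩ X).card = 2)
    (heq : L₁ ∩ X = L₂ ∩ X) : L₁ = L₂ := by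
  obtain ⟨x, y, hxy, hset⟩ := Finset.card_eq_two.mp hc
  have hx1 : x ∈ L₁ ∩ X := by rw [hset]; simp
  have hy1 : y ∈ L₁ ∩ X := by rw [hset]; simp
  have hx2 : x ∈ L₂ ∩ X := by rw [← heq, hset]; simp
  have hy2 : y ∈ L₂ ∩ X := by rw [← heq, hset]; simp
  exact M.unique L₁ h₁ L₂ h₂ x y hxy (Finset.mem_inter.mp hx1).1 (Finset.mem_inter.mp hy1).1
    (Finset.mem_inter.mp hx2).1 (Finset.mem_inter.mp hy2).1

lemma choose2_pos {n : ℕ} (h : 0 < n.choose 2) : 2 ≤ n := by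
  by_contra hn
  rw [Nat.choose_eq_zero_of_lt (by omega)] at h
  omega

lemma forward_dir {S : Type} [Fintype S] [DecidableEq S] {M : PSTS S} {n : ℕ}
    (hM : IsBinomial M (n + 1)) {X : Finset S} (hX : X.card = n)
    (hF : FreelyContains M X) :
    ∃ Z : Finset S, ∃ G : Finset (Finset S), RegularBinomialSub M Z G n := by
  obtain ⟨hcardS, hlinesc, hrank⟩ := hM
  obtain ⟨hF1, hF2⟩ := hF
  have hc2 : (n + 1).choose 2 = n + n.choose 2 := by
    rw [Nat.choose_succ_succ, Nat.choose_one_right]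
  have hc3 : (n + 1).choose 3 = n.choose 2 + n.choose 3 := Nat.choose_succ_succ n 2
  set Z : Finset S := Finset.univ \ X with hZdef
  have hmemZ : ∀ p : S, p ∈ Z ↔ p ∉ X := by intro p; simp [hZdef]
  have hZcard : Z.card = n.choose 2 := by
    rw [hZdef, Finset.card_sdiff_of_subset (Finset.subset_univ X), Finset.card_univ, hcardS, hX]
    omega
  set sides : Finset (Finset S) := M.lines.filter (fun L => (L ∩ X).card = 2) with hsdef
  -- every line through a vertex is a side
  have hstep2 : ∀ a ∈ X, ∀ L ∈ M.lines, a ∈ L → (L ∩ X).card = 2 := by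
    intro a ha
    set T := M.lines.filter (fun L => a ∈ L ∧ (L ∩ X).card = 2) with hT
    set R := M.lines.filter (fun L => a ∈ L) with hR
    have hTR : T ⊆ R := by
      intro L hL
      simp only [hT, hR, Finset.mem_filter] at *
      tauto
    have hRcard : R.card = n - 1 := by
      have h := hrank a
      rw [pointRank] at h
      rw [hR, h]
      omega
    have hTcard : n - 1 ≤ T.card := by
      have hle : (X.erase a).card ≤ T.card := by
        apply Finset.card_le_card_of_injOn
          (fun b => if h : b ∈ X.erase a then
            (hF1 a ha b (Finset.mem_erase.mp h).2 (Ne.symm (Finset.mem_erase.mp h).1)).choose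
            else ∅)
        · intro b hb
          simp only [Finset.mem_coe] at hb ⊢
          rw [dif_pos hb]
          obtain ⟨hL, haL, hbL, hLc⟩ :=
            (hF1 a ha b (Finset.mem_erase.mp hb).2 (Ne.symm (Finset.mem_erase.mp hb).1)).choose_spec
          exact Finset.mem_filter.mpr ⟨hL, haL, hLc⟩
        · intro b hb b' hb' heq
          simp only [Finset.coe_sort_coe, Finset.mem_coe] at hb hb'
          simp only [dif_pos hb, dif_pos hb'] at heq
          obtain ⟨hL, haL, hbL, hLc⟩ :=
            (hF1 a ha b (Finset.mem_erase.mp hb).2 (Ne.symm (Finset.mem_erase.mp hb).1)).choose_spec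
          obtain ⟨hL', haL', hbL', hLc'⟩ :=
            (hF1 a ha b' (Finset.mem_erase.mp hb').2 (Ne.symm (Finset.mem_erase.mp hb').1)).choose_spec
          rw [heq] at hbL
          exact two_mem_eq hLc' (Finset.mem_inter.mpr ⟨haL', ha⟩)
            (Finset.mem_inter.mpr ⟨hbL, (Finset.mem_erase.mp hb).2⟩)
            (Finset.mem_inter.mpr ⟨hbL', (Finset.mem_erase.mp hb').2⟩)
            (Finset.mem_erase.mp hb).1 (Finset.mem_erase.mp hb').1
      rw [Finset.card_erase_of_mem ha, hX] at hle
      exact hle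
    have hTReq : T = R := Finset.eq_of_subset_of_card_le hTR (by omega)
    intro L hL haL
    have : L ∈ T := by rw [hTReq, hR]; exact Finset.mem_filter.mpr ⟨hL, haL⟩
    exact ((Finset.mem_filter.mp this).2).2
  -- the number of sides
  have hsidescard : sides.card = n.choose 2 := by
    have hb : sides.card = (X.powersetCard 2).card := by
      apply Finset.card_bij (fun L _ => L ∩ X)
      · intro L hL
        exact Finset.mem_powersetCard.mpr ⟨Finset.inter_subset_right, (Finset.mem_filter.mp hL).2⟩
      · intro L₁ h₁ L₂ h₂ heq
        exact trace_inj M (Finset.mem_filter.mp h₁).1 (Finset.mem_filter.mp h₂).1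
          (Finset.mem_filter.mp h₁).2 heq
      · intro E hE
        obtain ⟨hEX, hE2⟩ := Finset.mem_powersetCard.mp hE
        obtain ⟨x, y, hxy, rfl⟩ := Finset.card_eq_two.mp hE2
        have hx : x ∈ X := hEX (by simp)
        have hy : y ∈ X := hEX (by simp)
        obtain ⟨L, hL, hxL, hyL, hLc⟩ := hF1 x hx y hy hxy
        refine ⟨L, Finset.mem_filter.mpr ⟨hL, hLc⟩, ?_⟩
        refine (Finset.eq_of_subset_of_card_le ?_ ?_).symm
        · intro z hz
          simp only [Finset.mem_insert, Finset.mem_singleton] at hz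
          rcases hz with rfl | rfl
          · exact Finset.mem_inter.mpr ⟨hxL, hx⟩
          · exact Finset.mem_inter.mpr ⟨hyL, hy⟩
        · rw [hLc, Finset.card_pair hxy]
    rw [hb, Finset.card_powersetCard, hX]
  -- non-sides avoid X
  have hnon : ∀ L ∈ M.lines, (L ∩ X).card ≠ 2 → L ⊆ Z := by
    intro L hL h x hx
    rw [hmemZ]
    intro hxX
    exact h (hstep2 x hxX L hL hx)
  set G : Finset (Finset S) := M.lines.filter (fun L => L ⊆ Z) with hGdef
  have hGiff : ∀ L ∈ M.lines, (L ⊆ Z ↔ ¬(L ∩ X).card = 2) := by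
    intro L hL
    constructor
    · intro hLZ hc
      obtain ⟨x, y, hxy, hset⟩ := Finset.card_eq_two.mp hc
      have hx : x ∈ L ∩ X := by rw [hset]; simp
      have := (hmemZ x).mp (hLZ (Finset.mem_inter.mp hx).1)
      exact this (Finset.mem_inter.mp hx).2
    · exact hnon L hL
  have hGeq : G = M.lines.filter (fun L => ¬(L ∩ X).card = 2) := by
    apply Finset.filter_congr
    intro L hL
    simp only [hGiff L hL]
  have hGcard : G.card = n.choose 3 := by
    have hsplit := Finset.card_filter_add_card_filter_not
      (s := M.lines) (p := fun L => (L ∩ X).card = 2)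
    rw [← hsdef] at hsplit
    rw [hGeq]
    omega
  -- third points partition Z
  have hthird : ∀ L ∈ sides, (L \ X).card = 1 := by
    intro L hL
    have h3 := M.card3 L (Finset.mem_filter.mp hL).1
    have h2 := (Finset.mem_filter.mp hL).2
    have := Finset.card_inter_add_card_sdiff L X
    omega
  have hSide : ∀ L ∈ sides, IsSide M X L := by
    intro L hL
    exact ⟨(Finset.mem_filter.mp hL).1, (Finset.mem_filter.mp hL).2⟩
  have hdisj : ∀ L₁ ∈ sides, ∀ L₂ ∈ sides, L₁ ≠ L₂ → Disjoint (L₁ \ X) (L₂ \ X) := by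
    intro L₁ h₁ L₂ h₂ hne
    rw [Finset.disjoint_left]
    intro p hp1 hp2
    exact (Finset.mem_sdiff.mp hp1).2
      (hF2 L₁ L₂ (hSide L₁ h₁) (hSide L₂ h₂) hne p
        (Finset.mem_sdiff.mp hp1).1 (Finset.mem_sdiff.mp hp2).1)
  have hU : sides.biUnion (fun L => L \ X) = Z := by
    apply Finset.eq_of_subset_of_card_le
    · intro x hx
      obtain ⟨L, hL, hxL⟩ := Finset.mem_biUnion.mp hx
      exact (hmemZ x).mpr (Finset.mem_sdiff.mp hxL).2
    · rw [Finset.card_biUnion hdisj, hZcard]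
      calc n.choose 2 = sides.card := hsidescard.symm
        _ = ∑ L ∈ sides, 1 := by rw [Finset.sum_const, smul_eq_mul, mul_one]
        _ ≤ ∑ L ∈ sides, (L \ X).card := Finset.sum_le_sum (fun L hL => by rw [hthird L hL])
  have huniq : ∀ p ∈ Z, ∀ L₁ ∈ sides, ∀ L₂ ∈ sides, p ∈ L₁ → p ∈ L₂ → L₁ = L₂ := by
    intro p hp L₁ h₁ L₂ h₂ hp1 hp2
    by_contra hne
    exact (hmemZ p).mp hp (hF2 L₁ L₂ (hSide L₁ h₁) (hSide L₂ h₂) hne p hp1 hp2)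
  -- ranks inside G
  have hrankG : ∀ p ∈ Z, (G.filter (fun L => p ∈ L)).card = n - 2 := by
    intro p hp
    have hn2 : 2 ≤ n := choose2_pos (by
      have : 0 < Z.card := Finset.card_pos.mpr ⟨p, hp⟩
      omega)
    have hp' : p ∈ sides.biUnion (fun L => L \ X) := by rw [hU]; exact hp
    obtain ⟨L₀, hL₀s, hpL₀'⟩ := Finset.mem_biUnion.mp hp'
    have hpL₀ : p ∈ L₀ := (Finset.mem_sdiff.mp hpL₀').1
    set R := M.lines.filter (fun L => p ∈ L) with hR
    have hRcard : R.card = n - 1 := by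
      have h := hrank p
      rw [pointRank] at h
      rw [hR, h]
      omega
    have hsplit := Finset.card_filter_add_card_filter_not
      (s := R) (p := fun L => (L ∩ X).card = 2)
    have h1 : R.filter (fun L => (L ∩ X).card = 2) = {L₀} := by
      ext L
      simp only [Finset.mem_filter, Finset.mem_singleton, hR]
      constructor
      · rintro ⟨⟨hLl, hpL⟩, hc⟩
        exact huniq p hp L (Finset.mem_filter.mpr ⟨hLl, hc⟩) L₀ hL₀s hpL hpL₀
      · rintro rfl
        exact ⟨⟨(Finset.mem_filter.mp hL₀s).1, hpL₀⟩, (Finset.mem_filter.mp hL₀s).2⟩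
    have h2 : R.filter (fun L => ¬(L ∩ X).card = 2) = G.filter (fun L => p ∈ L) := by
      ext L
      simp only [Finset.mem_filter, hR, hGdef]
      constructor
      · rintro ⟨⟨hLl, hpL⟩, hc⟩
        exact ⟨⟨hLl, hnon L hLl hc⟩, hpL⟩
      · rintro ⟨⟨hLl, hLZ⟩, hpL⟩
        exact ⟨⟨hLl, hpL⟩, (hGiff L hLl).mp hLZ⟩
    rw [h1, h2] at hsplit
    simp only [Finset.card_singleton] at hsplit
    omega
  refine ⟨Z, G, Finset.filter_subset _ _, ?_, ?_, hZcard, hGcard, hrankG⟩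
  · intro L hL
    exact (Finset.mem_filter.mp hL).2
  · intro L hL h2
    by_cases hc : (L ∩ X).card = 2
    · exfalso
      have hZX : L ∩ Z = L \ X := by
        ext x
        simp [hZdef]
      rw [hZX] at h2
      have := hthird L (Finset.mem_filter.mpr ⟨hL, hc⟩)
      omega
    · exact Finset.mem_filter.mpr ⟨hL, hnon L hL hc⟩

lemma backward_dir {S : Type} [Fintype S] [DecidableEq S] {M : PSTS S} {n : ℕ}
    (hM : IsBinomial M (n + 1)) {Z : Finset S} {G : Finset (Finset S)}
    (hR : RegularBinomialSub M Z G n) :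
    ∃ X : Finset S, X.card = n ∧ FreelyContains M X := by
  obtain ⟨hcardS, hlinesc, hrank⟩ := hM
  obtain ⟨hG1, hG2, hG3, hZc, hGc, hrkG⟩ := hR
  have hc2 : (n + 1).choose 2 = n + n.choose 2 := by
    rw [Nat.choose_succ_succ, Nat.choose_one_right]
  have hc3 : (n + 1).choose 3 = n.choose 2 + n.choose 3 := Nat.choose_succ_succ n 2
  set X : Finset S := Finset.univ \ Z with hXdef
  have hmemX : ∀ p : S, p ∈ X ↔ p ∉ Z := by intro p; simp [hXdef]
  have hXcard : X.card = n := by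
    rw [hXdef, Finset.card_sdiff_of_subset (Finset.subset_univ Z), Finset.card_univ, hcardS, hZc]
    omega
  -- each point of Z lies on exactly one non-G line
  have huniqline : ∀ p ∈ Z, (M.lines.filter (fun L => p ∈ L ∧ L ∉ G)).card = 1 := by
    intro p hp
    have hn2 : 2 ≤ n := choose2_pos (by
      have : 0 < Z.card := Finset.card_pos.mpr ⟨p, hp⟩
      omega)
    have hA : M.lines.filter (fun L => p ∈ L ∧ L ∈ G) = G.filter (fun L => p ∈ L) := by
      ext L
      simp only [Finset.mem_filter]
      constructor
      · rintro ⟨hLl, hpL, hLG⟩; exact ⟨hLG, hpL⟩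
      · rintro ⟨hLG, hpL⟩; exact ⟨hG1 hLG, hpL, hLG⟩
    have hsplit := Finset.card_filter_add_card_filter_not
      (s := M.lines.filter (fun L => p ∈ L)) (p := fun L => L ∈ G)
    rw [Finset.filter_filter, Finset.filter_filter] at hsplit
    have hrk : (M.lines.filter (fun L => p ∈ L)).card = n - 1 := by
      have h := hrank p
      rw [pointRank] at h
      rw [h]
      omega
    have hAc : (M.lines.filter (fun L => p ∈ L ∧ L ∈ G)).card = n - 2 := by
      rw [hA]; exact hrkG p hp
    rw [hAc] at hsplit
    rw [hrk] at hsplit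
    omega
  -- lines not in G
  set nonG : Finset (Finset S) := M.lines.filter (fun L => L ∉ G) with hnGdef
  have hGfilter : M.lines.filter (fun L => L ∈ G) = G := by
    ext L
    simp only [Finset.mem_filter]
    exact ⟨fun h => h.2, fun h => ⟨hG1 h, h⟩⟩
  have hnGcard : nonG.card = n.choose 2 := by
    have hsplit := Finset.card_filter_add_card_filter_not
      (s := M.lines) (p := fun L => L ∈ G)
    rw [hGfilter] at hsplit
    rw [hnGdef]
    omega
  have hle1 : ∀ L ∈ nonG, (L ∩ Z).card ≤ 1 := by
    intro L hL
    by_contra h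
    exact (Finset.mem_filter.mp hL).2 (hG3 L (Finset.mem_filter.mp hL).1 (by omega))
  -- every non-G line meets Z in exactly one point
  have hmeet : ∀ L ∈ nonG, (L ∩ Z).card = 1 := by
    have hdisj : ∀ L₁ ∈ nonG, ∀ L₂ ∈ nonG, L₁ ≠ L₂ → Disjoint (L₁ ∩ Z) (L₂ ∩ Z) := by
      intro L₁ h₁ L₂ h₂ hne
      rw [Finset.disjoint_left]
      intro p hp1 hp2
      have hpZ : p ∈ Z := (Finset.mem_inter.mp hp1).2
      have hcard1 := huniqline p hpZ
      have hmem1 : L₁ ∈ M.lines.filter (fun L => p ∈ L ∧ L ∉ G) :=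
        Finset.mem_filter.mpr ⟨(Finset.mem_filter.mp h₁).1,
          (Finset.mem_inter.mp hp1).1, (Finset.mem_filter.mp h₁).2⟩
      have hmem2 : L₂ ∈ M.lines.filter (fun L => p ∈ L ∧ L ∉ G) :=
        Finset.mem_filter.mpr ⟨(Finset.mem_filter.mp h₂).1,
          (Finset.mem_inter.mp hp2).1, (Finset.mem_filter.mp h₂).2⟩
      exact hne (Finset.card_le_one.mp (le_of_eq hcard1) L₁ hmem1 L₂ hmem2)
    have hVZ : nonG.biUnion (fun L => L ∩ Z) = Z := by
      apply Finset.Subset.antisymm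
      · intro p hp
        obtain ⟨L, hL, hpL⟩ := Finset.mem_biUnion.mp hp
        exact (Finset.mem_inter.mp hpL).2
      · intro p hp
        have hcard1 := huniqline p hp
        obtain ⟨L, hL⟩ := Finset.card_pos.mp (by omega :
          0 < (M.lines.filter (fun L => p ∈ L ∧ L ∉ G)).card)
        obtain ⟨hLl, hpL, hLG⟩ := Finset.mem_filter.mp hL
        exact Finset.mem_biUnion.mpr ⟨L, Finset.mem_filter.mpr ⟨hLl, hLG⟩,
          Finset.mem_inter.mpr ⟨hpL, hp⟩⟩
    have hsum : ∑ L ∈ nonG, (L ∩ Z).card = nonG.card := by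
      rw [← Finset.card_biUnion hdisj, hVZ, hZc, hnGcard]
    intro L hL
    by_contra hne
    have hlt : (L ∩ Z).card < 1 := lt_of_le_of_ne (hle1 L hL) hne
    have : ∑ L ∈ nonG, (L ∩ Z).card < ∑ L ∈ nonG, 1 :=
      Finset.sum_lt_sum hle1 ⟨L, hL, hlt⟩
    rw [Finset.sum_const, smul_eq_mul, mul_one] at this
    omega
  have hside2 : ∀ L ∈ nonG, (L ∩ X).card = 2 := by
    intro L hL
    have h3 := M.card3 L (Finset.mem_filter.mp hL).1
    have hXZ : L ∩ X = L \ Z := by ext x; simp [hXdef]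
    have := Finset.card_inter_add_card_sdiff L Z
    rw [hXZ]
    have := hmeet L hL
    omega
  refine ⟨X, hXcard, ?_, ?_⟩
  · -- every edge extends
    intro a ha b hb hab
    have himg : nonG.image (fun L => L ∩ X) = X.powersetCard 2 := by
      apply Finset.eq_of_subset_of_card_le
      · intro E hE
        obtain ⟨L, hL, rfl⟩ := Finset.mem_image.mp hE
        exact Finset.mem_powersetCard.mpr ⟨Finset.inter_subset_right, hside2 L hL⟩
      · rw [Finset.card_powersetCard, hXcard]
        have hinjc : (nonG.image (fun L => L ∩ X)).card = nonG.card := by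
          apply Finset.card_image_of_injOn
          intro L₁ h₁ L₂ h₂ heq
          simp only [Finset.coe_sort_coe, Finset.mem_coe] at h₁ h₂
          exact trace_inj M (Finset.mem_filter.mp h₁).1 (Finset.mem_filter.mp h₂).1
            (hside2 L₁ h₁) heq
        rw [hinjc, hnGcard]
    have hab2 : ({a, b} : Finset S) ∈ X.powersetCard 2 :=
      Finset.mem_powersetCard.mpr ⟨by
        intro z hz
        simp only [Finset.mem_insert, Finset.mem_singleton] at hz
        rcases hz with rfl | rfl <;> assumption, Finset.card_pair hab⟩
    rw [← himg] at hab2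
    obtain ⟨L, hL, hLX⟩ := Finset.mem_image.mp hab2
    refine ⟨L, (Finset.mem_filter.mp hL).1, ?_, ?_, ?_⟩
    · have : a ∈ L ∩ X := by rw [hLX]; simp
      exact (Finset.mem_inter.mp this).1
    · have : b ∈ L ∩ X := by rw [hLX]; simp
      exact (Finset.mem_inter.mp this).1
    · rw [hLX]; exact Finset.card_pair hab
  · -- sides meet only in X
    intro L₁ L₂ hs₁ hs₂ hne p hp₁ hp₂
    by_contra hpX
    have hpZ : p ∈ Z := by
      by_contra hpZ
      exact hpX ((hmemX p).mpr hpZ)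
    have hnotG : ∀ L : Finset S, IsSide M X L → L ∉ G := by
      intro L hs hLG
      have hsub := hG2 L hLG
      have : L ∩ X = ∅ := by
        rw [Finset.eq_empty_iff_forall_notMem]
        intro x hx
        exact (hmemX x).mp (Finset.mem_inter.mp hx).2 (hsub (Finset.mem_inter.mp hx).1)
      obtain ⟨hl, hcc⟩ := hs
      rw [this] at hcc
      simp at hcc
    have hcard1 := huniqline p hpZ
    have hmem1 : L₁ ∈ M.lines.filter (fun L => p ∈ L ∧ L ∉ G) :=
      Finset.mem_filter.mpr ⟨hs₁.1, hp₁, hnotG L₁ hs₁⟩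
    have hmem2 : L₂ ∈ M.lines.filter (fun L => p ∈ L ∧ L ∉ G) :=
      Finset.mem_filter.mpr ⟨hs₂.1, hp₂, hnotG L₂ hs₂⟩
    exact hne (Finset.card_le_one.mp (le_of_eq hcard1) L₁ hmem1 L₂ hmem2)

/-- A binomial B(n+1)-configuration freely contains a complete
graph K_n iff it regularly contains a B(n)-subconfiguration as a subspace. -/
theorem stmt_4 (n : ℕ) (S : Type) [Fintype S] [DecidableEq S] (M : PSTS S)
    (hM : IsBinomial M (n + 1)) :
    (∃ X : Finset S, X.card = n ∧ FreelyContains M X) ↔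
    (∃ Z : Finset S, ∃ G : Finset (Finset S), RegularBinomialSub M Z G n) := by
  constructor
  · rintro ⟨X, hX, hF⟩
    exact forward_dir hM hX hF
  · rintro ⟨Z, G, hR⟩
    exact backward_dir hM hR
end

section
/- Any two distinct complete K_n-graphs freely contained in a binomial B(n+1)-configuration share exactly one vertex. -/
open Finset

/-- Every line through a vertex of a freely contained `K_n` is a side. -/
lemma line_through_vertex_is_side {S : Type} [Fintype S] [DecidableEq S]
    (M : PSTS S) (n : ℕ) (hM : IsBinomial M (n + 1))
    (X : Finset S) (hX : X.card = n) (hf : FreelyContains M X)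
    (L : Finset S) (hL : L ∈ M.lines) (a : S) (ha : a ∈ X) (haL : a ∈ L) :
    (L ∩ X).card = 2 := by
  classical
  set T : Finset (Finset S) :=
    M.lines.filter (fun L => a ∈ L ∧ (L ∩ X).card = 2) with hT
  set F : Finset (Finset S) := M.lines.filter (fun L => a ∈ L) with hF
  have hTF : T ⊆ F := by
    intro K hK
    simp only [hT, hF, mem_filter] at hK ⊢
    exact ⟨hK.1, hK.2.1⟩
  have hFcard : F.card = n - 1 := by
    have := hM.2.2 a
    simpa [pointRank, hF] using this
  -- injection from X.erase a into T
  have hle : (X.erase a).card ≤ T.card := by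
    set f : S → Finset S := fun b =>
      if h : ∃ L, L ∈ M.lines ∧ a ∈ L ∧ b ∈ L ∧ (L ∩ X).card = 2 then h.choose else ∅
      with hfdef
    have hfspec : ∀ b ∈ X.erase a,
        f b ∈ M.lines ∧ a ∈ f b ∧ b ∈ f b ∧ (f b ∩ X).card = 2 := by
      intro b hb
      rw [mem_erase] at hb
      obtain ⟨L', hL', haL', hbL', hcard'⟩ := hf.1 a ha b hb.2 (Ne.symm hb.1)
      have h : ∃ L, L ∈ M.lines ∧ a ∈ L ∧ b ∈ L ∧ (L ∩ X).card = 2 :=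
        ⟨L', hL', haL', hbL', hcard'⟩
      simp only [hfdef, dif_pos h]
      exact h.choose_spec
    apply Finset.card_le_card_of_injOn f
    · intro b hb
      obtain ⟨h1', h2', h3', h4'⟩ := hfspec b hb
      simp only [hT, Finset.mem_coe, mem_filter]
      exact ⟨h1', h2', h4'⟩
    · intro b hb c hc hbc
      obtain ⟨_, ha1, hb1, hc1⟩ := hfspec b (by simpa using (Finset.mem_coe.mp hb))
      obtain ⟨_, ha2, hb2, _⟩ := hfspec c (by simpa using (Finset.mem_coe.mp hc))
      simp only [Finset.mem_coe, mem_erase] at hb hc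
      by_contra hne
      have hsub : ({a, b, c} : Finset S) ⊆ f b ∩ X := by
        intro y hy
        simp only [mem_insert, mem_singleton] at hy
        rcases hy with rfl | rfl | rfl
        · exact mem_inter.mpr ⟨ha1, ha⟩
        · exact mem_inter.mpr ⟨hb1, hb.2⟩
        · exact mem_inter.mpr ⟨hbc ▸ hb2, hc.2⟩
      have h3 : ({a, b, c} : Finset S).card = 3 := by
        rw [card_insert_of_notMem, card_insert_of_notMem, card_singleton]
        · simp [hne]
        · simp only [mem_insert, mem_singleton]
          push_neg
          exact ⟨Ne.symm hb.1, Ne.symm hc.1⟩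
      have := Finset.card_le_card hsub
      omega
  have hXe : (X.erase a).card = n - 1 := by rw [card_erase_of_mem ha, hX]
  have hFT : F = T := (Finset.eq_of_subset_of_card_le hTF (by omega)).symm
  have : L ∈ T := by
    rw [← hFT, hF, mem_filter]; exact ⟨hL, haL⟩
  rw [hT, mem_filter] at this
  exact this.2.2

/-- Any two distinct complete K_n-graphs freely contained in a
binomial B(n+1)-configuration share exactly one vertex. -/
theorem stmt_5 (n : ℕ) (S : Type) [Fintype S] [DecidableEq S] (M : PSTS S)
    (hM : IsBinomial M (n + 1)) (X₁ X₂ : Finset S)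
    (h1 : X₁.card = n) (h2 : X₂.card = n)
    (hf1 : FreelyContains M X₁) (hf2 : FreelyContains M X₂) (hne : X₁ ≠ X₂) :
    (X₁ ∩ X₂).card = 1 := by
  classical
  rcases Nat.eq_zero_or_pos n with hn0 | hn
  · exfalso
    apply hne
    have e1 : X₁ = ∅ := card_eq_zero.mp (by rw [h1, hn0])
    have e2 : X₂ = ∅ := card_eq_zero.mp (by rw [h2, hn0])
    rw [e1, e2]
  by_contra hcard
  rcases Nat.lt_or_ge (X₁ ∩ X₂).card 1 with hlt | hge
  · -- disjoint case
    have hdis : X₁ ∩ X₂ = ∅ := card_eq_zero.mp (by omega)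
    obtain ⟨x, hx⟩ := card_pos.mp (h2 ▸ hn)
    have hxX1 : x ∉ X₁ := fun h => by
      have : x ∈ X₁ ∩ X₂ := mem_inter.mpr ⟨h, hx⟩
      simp [hdis] at this
    haveI : Nonempty S := ⟨x⟩
    set Sides : Finset (Finset S) :=
      M.lines.filter (fun L => (L ∩ X₁).card = 2) with hSides
    -- Sides.card = choose n 2
    have hScard : Sides.card = Nat.choose n 2 := by
      rw [← h1, ← Finset.card_powersetCard 2 X₁]
      apply Finset.card_bij (fun L _ => L ∩ X₁)
      · intro L hL
        rw [hSides, mem_filter] at hL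
        rw [mem_powersetCard]
        exact ⟨inter_subset_right, hL.2⟩
      · intro L₁ hL₁ L₂ hL₂ heq
        rw [hSides, mem_filter] at hL₁ hL₂
        obtain ⟨a, ha, b, hb, hab⟩ := Finset.one_lt_card.mp (by omega : 1 < (L₁ ∩ X₁).card)
        have ha2 : a ∈ L₂ ∩ X₁ := heq ▸ ha
        have hb2 : b ∈ L₂ ∩ X₁ := heq ▸ hb
        exact M.unique L₁ hL₁.1 L₂ hL₂.1 a b hab (mem_inter.mp ha).1
          (mem_inter.mp hb).1 (mem_inter.mp ha2).1 (mem_inter.mp hb2).1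
      · intro e he
        rw [mem_powersetCard] at he
        obtain ⟨a, ha, b, hb, hab⟩ := Finset.one_lt_card.mp (by omega : 1 < e.card)
        obtain ⟨L, hL, haL, hbL, hcard2⟩ := hf1.1 a (he.1 ha) b (he.1 hb) hab
        refine ⟨L, ?_, ?_⟩
        · rw [hSides, mem_filter]; exact ⟨hL, hcard2⟩
        · have hsub : e ⊆ L ∩ X₁ := by
            intro y hy
            have hy2 : y ∈ X₁ := he.1 hy
            -- e has card 2 and contains a, b distinct, so e = {a,b}
            have : e = {a, b} := by
              apply Finset.eq_of_subset_of_card_le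
              · intro z hz
                simp only [mem_insert, mem_singleton]
                by_contra hz'
                push_neg at hz'
                have hsub3 : ({a, b, z} : Finset S) ⊆ e := by
                  intro w hw
                  simp only [mem_insert, mem_singleton] at hw
                  rcases hw with rfl | rfl | rfl
                  exacts [ha, hb, hz]
                have h3 : ({a, b, z} : Finset S).card = 3 := by
                  rw [card_insert_of_notMem, card_insert_of_notMem, card_singleton]
                  · simp [Ne.symm hz'.2]
                  · simp only [mem_insert, mem_singleton]
                    push_neg
                    exact ⟨hab, Ne.symm hz'.1⟩
                have := Finset.card_le_card hsub3
                omega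
              · rw [he.2]
                exact Finset.card_insert_le a {b} |>.trans (by simp)
            rw [this] at hy
            simp only [mem_insert, mem_singleton] at hy
            rcases hy with rfl | rfl
            · exact mem_inter.mpr ⟨haL, hy2⟩
            · exact mem_inter.mpr ⟨hbL, hy2⟩
          exact (Finset.eq_of_subset_of_card_le hsub (by omega)).symm
    -- third-point map
    set g : Finset S → S := fun L =>
      if h : (L \ X₁).Nonempty then h.choose else Classical.arbitrary S with hg
    have hgspec : ∀ L ∈ Sides, g L ∈ L ∧ g L ∉ X₁ := by
      intro L hL
      rw [hSides, mem_filter] at hL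
      have hc3 : L.card = 3 := M.card3 L hL.1
      have hsd : (L \ X₁).card = 1 := by
        have := Finset.card_inter_add_card_sdiff L X₁
        omega
      have hne' : (L \ X₁).Nonempty := card_pos.mp (by omega)
      have hmem : g L ∈ L \ X₁ := by
        rw [hg]
        simp only [dif_pos hne']
        exact hne'.choose_spec
      rw [mem_sdiff] at hmem
      exact hmem
    -- the image of g covers all points outside X₁
    have hinj : Set.InjOn g Sides := by
      intro L₁ hL₁ L₂ hL₂ heq
      by_contra hLne
      obtain ⟨hm1, ho1⟩ := hgspec L₁ (Finset.mem_coe.mp hL₁)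
      obtain ⟨hm2, _⟩ := hgspec L₂ (Finset.mem_coe.mp hL₂)
      have hL₁' := Finset.mem_coe.mp hL₁
      have hL₂' := Finset.mem_coe.mp hL₂
      rw [hSides, mem_filter] at hL₁' hL₂'
      exact ho1 (hf1.2 L₁ L₂ ⟨hL₁'.1, hL₁'.2⟩ ⟨hL₂'.1, hL₂'.2⟩ hLne (g L₁) hm1
        (heq ▸ hm2))
    have himsub : Sides.image g ⊆ univ \ X₁ := by
      intro y hy
      rw [mem_image] at hy
      obtain ⟨L, hL, rfl⟩ := hy
      rw [mem_sdiff]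
      exact ⟨mem_univ _, (hgspec L hL).2⟩
    have hucard : (univ \ X₁ : Finset S).card = Nat.choose n 2 := by
      rw [card_sdiff_of_subset (subset_univ X₁), card_univ, hM.1, h1]
      have : Nat.choose (n+1) 2 = n + Nat.choose n 2 := by
        rw [Nat.choose_succ_succ]
        simp [Nat.choose_one_right]
      omega
    have himcard : (Sides.image g).card = Nat.choose n 2 := by
      rw [Finset.card_image_of_injOn hinj, hScard]
    have himeq : Sides.image g = univ \ X₁ :=
      Finset.eq_of_subset_of_card_le himsub (by omega)
    have hxim : x ∈ Sides.image g := by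
      rw [himeq, mem_sdiff]
      exact ⟨mem_univ _, hxX1⟩
    rw [mem_image] at hxim
    obtain ⟨L, hLS, hgL⟩ := hxim
    have hxL : x ∈ L := hgL ▸ (hgspec L hLS).1
    have hLS' := hLS
    rw [hSides, mem_filter] at hLS'
    have hs2 : (L ∩ X₂).card = 2 :=
      line_through_vertex_is_side M n hM X₂ h2 hf2 L hLS'.1 x hx hxL
    have hc3 : L.card = 3 := M.card3 L hLS'.1
    have hdisL : Disjoint (L ∩ X₁) (L ∩ X₂) := by
      rw [Finset.disjoint_left]
      intro y hy1 hy2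
      have : y ∈ X₁ ∩ X₂ := mem_inter.mpr ⟨(mem_inter.mp hy1).2, (mem_inter.mp hy2).2⟩
      simp [hdis] at this
    have hsubL : (L ∩ X₁) ∪ (L ∩ X₂) ⊆ L := by
      intro y hy
      rcases mem_union.mp hy with h | h
      exacts [(mem_inter.mp h).1, (mem_inter.mp h).1]
    have := Finset.card_le_card hsubL
    rw [Finset.card_union_of_disjoint hdisL] at this
    omega
  · -- card ≥ 2 is impossible; and card = 1 contradicts hcard... 
    have hge2 : 2 ≤ (X₁ ∩ X₂).card := by omega
    obtain ⟨a, ha, b, hb, hab⟩ := Finset.one_lt_card.mp hge2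
    rw [mem_inter] at ha hb
    obtain ⟨x, hx2, hx1⟩ : ∃ x ∈ X₂, x ∉ X₁ := by
      by_contra h
      push_neg at h
      exact hne (Finset.eq_of_subset_of_card_le h (by omega)).symm
    have hxa : x ≠ a := fun h => hx1 (h ▸ ha.1)
    have hxb : x ≠ b := fun h => hx1 (h ▸ hb.1)
    obtain ⟨La, hLa, hxLa, haLa, hcLa⟩ := hf2.1 x hx2 a ha.2 hxa
    obtain ⟨Lb, hLb, hxLb, hbLb, hcLb⟩ := hf2.1 x hx2 b hb.2 hxb
    have hLne : La ≠ Lb := by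
      intro h
      subst h
      have hsub : ({a, b, x} : Finset S) ⊆ La ∩ X₂ := by
        intro w hw
        simp only [mem_insert, mem_singleton] at hw
        rcases hw with rfl | rfl | rfl
        · exact mem_inter.mpr ⟨haLa, ha.2⟩
        · exact mem_inter.mpr ⟨hbLb, hb.2⟩
        · exact mem_inter.mpr ⟨hxLa, hx2⟩
      have h3 : ({a, b, x} : Finset S).card = 3 := by
        rw [card_insert_of_notMem, card_insert_of_notMem, card_singleton]
        · simp [Ne.symm hxb]
        · simp only [mem_insert, mem_singleton]
          push_neg
          exact ⟨hab, Ne.symm hxa⟩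
      have := Finset.card_le_card hsub
      omega
    have hsa : (La ∩ X₁).card = 2 :=
      line_through_vertex_is_side M n hM X₁ h1 hf1 La hLa a ha.1 haLa
    have hsb : (Lb ∩ X₁).card = 2 :=
      line_through_vertex_is_side M n hM X₁ h1 hf1 Lb hLb b hb.1 hbLb
    exact hx1 (hf1.2 La Lb ⟨hLa, hsa⟩ ⟨hLb, hsb⟩ hLne x hxLa hxLb)
end

section
/- Let G_1, G_2 be two complete K_n-graphs on vertex sets X_1, X_2 freely contained in a binomial B(n+1)-configuration M, with common vertex p ∈ X_1 ∩ X_2. Then every side of G_1 avoiding p crosses exactly one side of G_2, and that side of G_2 also avoids p; i.e., the sides of the two graphs missing p pair up via their intersection points, which all lie outside X_1 ∪ X_2. -/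
open Finset

/-- Every line of `M` through a vertex of a freely contained `K_n` is a side. -/
lemma aux_lines_through_vertex {S : Type} [Fintype S] [DecidableEq S] (M : PSTS S)
    {n : ℕ} (hM : IsBinomial M (n + 1)) {X : Finset S} (hX : X.card = n)
    (hf : FreelyContains M X) {x : S} (hx : x ∈ X) :
    ∀ L ∈ M.lines, x ∈ L → (L ∩ X).card = 2 := by
  classical
  set T := M.lines.filter (fun L => x ∈ L) with hT
  have hTcard : T.card = n - 1 := by
    have h := hM.2.2 x
    unfold pointRank at h
    rw [hT]
    omega
  set Sd := T.filter (fun L => (L ∩ X).card = 2) with hSd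
  have hchoice : ∀ y ∈ X.erase x, ∃ L, L ∈ M.lines ∧ x ∈ L ∧ y ∈ L ∧ (L ∩ X).card = 2 := by
    intro y hy
    rcases Finset.mem_erase.mp hy with ⟨hyx, hyX⟩
    obtain ⟨L, hL, h₁, h₂, h₃⟩ := hf.1 x hx y hyX (Ne.symm hyx)
    exact ⟨L, hL, h₁, h₂, h₃⟩
  choose! g hg1 hg2 hg3 hg4 using hchoice
  have hmap : ∀ y ∈ X.erase x, g y ∈ Sd := by
    intro y hy
    simp only [hSd, hT, mem_filter]
    exact ⟨⟨hg1 y hy, hg2 y hy⟩, hg4 y hy⟩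
  have hinj : Set.InjOn g (X.erase x) := by
    intro y hy z hz hEq
    by_contra hne
    have hyx : y ≠ x := (Finset.mem_erase.mp hy).1
    have hzx : z ≠ x := (Finset.mem_erase.mp hz).1
    have hyX : y ∈ X := (Finset.mem_erase.mp hy).2
    have hzX : z ∈ X := (Finset.mem_erase.mp hz).2
    have hsub : ({x, y, z} : Finset S) ⊆ g y ∩ X := by
      intro w hw
      rcases Finset.mem_insert.mp hw with hwx | hw
      · rw [hwx]; exact Finset.mem_inter.mpr ⟨hg2 y hy, hx⟩
      rcases Finset.mem_insert.mp hw with hwy | hw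
      · rw [hwy]; exact Finset.mem_inter.mpr ⟨hg3 y hy, hyX⟩
      · rw [Finset.mem_singleton.mp hw]
        refine Finset.mem_inter.mpr ⟨?_, hzX⟩
        rw [hEq]; exact hg3 z hz
    have hcard3 : ({x, y, z} : Finset S).card = 3 :=
      Finset.card_eq_three.mpr ⟨x, y, z, Ne.symm hyx, Ne.symm hzx, hne, rfl⟩
    have := Finset.card_le_card hsub
    rw [hcard3, hg4 y hy] at this
    omega
  have hle : n - 1 ≤ Sd.card := by
    have := Finset.card_le_card_of_injOn g hmap hinj
    rwa [Finset.card_erase_of_mem hx, hX] at this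
  have hEqTS : Sd = T :=
    Finset.eq_of_subset_of_card_le (Finset.filter_subset _ _) (by omega)
  intro L hL hxL
  have : L ∈ Sd := by rw [hEqTS]; exact Finset.mem_filter.mpr ⟨hL, hxL⟩
  exact (Finset.mem_filter.mp this).2

/-- Every point outside a freely contained `K_n` lies on some side. -/
lemma aux_exists_side_through {S : Type} [Fintype S] [DecidableEq S] (M : PSTS S)
    {n : ℕ} (hcard : Fintype.card S = Nat.choose (n + 1) 2) {X : Finset S} (hX : X.card = n)
    (hf : FreelyContains M X) {c : S} (hc : c ∉ X) :
    ∃ L, IsSide M X L ∧ c ∈ L := by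
  classical
  set Sides := M.lines.filter (fun L => (L ∩ X).card = 2) with hSides
  have hSidesCard : Sides.card = Nat.choose n 2 := by
    have hbij : Sides.card = (X.powersetCard 2).card := by
      apply Finset.card_bij (fun L _ => L ∩ X)
      · intro L hL
        rw [Finset.mem_powersetCard]
        exact ⟨Finset.inter_subset_right, (Finset.mem_filter.mp hL).2⟩
      · intro L hL L' hL' hEq
        obtain ⟨a, b, hab, hset⟩ := Finset.card_eq_two.mp (Finset.mem_filter.mp hL).2
        have haL : a ∈ L ∩ X := hset ▸ Finset.mem_insert_self a {b}
        have hbL : b ∈ L ∩ X := hset ▸ Finset.mem_insert_of_mem (Finset.mem_singleton_self b)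
        have haL' : a ∈ L' ∩ X := hEq ▸ haL
        have hbL' : b ∈ L' ∩ X := hEq ▸ hbL
        exact M.unique L (Finset.mem_filter.mp hL).1 L' (Finset.mem_filter.mp hL').1 a b hab
          (Finset.mem_inter.mp haL).1 (Finset.mem_inter.mp hbL).1
          (Finset.mem_inter.mp haL').1 (Finset.mem_inter.mp hbL').1
      · intro e he
        rw [Finset.mem_powersetCard] at he
        obtain ⟨a, b, hab, hset⟩ := Finset.card_eq_two.mp he.2
        have haX : a ∈ X := he.1 (hset ▸ Finset.mem_insert_self a {b})
        have hbX : b ∈ X := he.1 (hset ▸ Finset.mem_insert_of_mem (Finset.mem_singleton_self b))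
        obtain ⟨L, hLlines, haL, hbL, hLcard⟩ := hf.1 a haX b hbX hab
        refine ⟨L, Finset.mem_filter.mpr ⟨hLlines, hLcard⟩, ?_⟩
        have hsub : e ⊆ L ∩ X := by
          rw [hset]
          intro z hz
          rcases Finset.mem_insert.mp hz with rfl | hz
          · exact Finset.mem_inter.mpr ⟨haL, haX⟩
          · rw [Finset.mem_singleton.mp hz]
            exact Finset.mem_inter.mpr ⟨hbL, hbX⟩
        exact (Finset.eq_of_subset_of_card_le hsub (by rw [hLcard, he.2])).symm
    rw [hbij, Finset.card_powersetCard, hX]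
  have hne' : ∀ L ∈ Sides, (L \ X).Nonempty := by
    intro L hL
    have h3 := M.card3 L (Finset.mem_filter.mp hL).1
    have h2 := (Finset.mem_filter.mp hL).2
    have hsum := Finset.card_inter_add_card_sdiff L X
    rw [← Finset.card_pos]
    omega
  set f : Finset S → S := fun L => if h : (L \ X).Nonempty then h.choose else c with hfdef
  have hfmem : ∀ L ∈ Sides, f L ∈ L ∧ f L ∉ X := by
    intro L hL
    have h := hne' L hL
    have hmem : f L ∈ L \ X := by
      rw [hfdef]; simp only [dif_pos h]; exact h.choose_spec
    exact ⟨(Finset.mem_sdiff.mp hmem).1, (Finset.mem_sdiff.mp hmem).2⟩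
  have hinj : Set.InjOn f Sides := by
    intro L hL L' hL' hEq
    by_contra hne
    have h1 := hfmem L hL
    have h2 := hfmem L' hL'
    have hfL' : f L ∈ L' := by rw [hEq]; exact h2.1
    have := hf.2 L L' ⟨(Finset.mem_filter.mp hL).1, (Finset.mem_filter.mp hL).2⟩
      ⟨(Finset.mem_filter.mp hL').1, (Finset.mem_filter.mp hL').2⟩ hne (f L) h1.1 hfL'
    exact h1.2 this
  have himage : Sides.image f = Finset.univ \ X := by
    apply Finset.eq_of_subset_of_card_le
    · intro u hu
      obtain ⟨L, hL, rfl⟩ := Finset.mem_image.mp hu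
      exact Finset.mem_sdiff.mpr ⟨Finset.mem_univ _, (hfmem L hL).2⟩
    · rw [Finset.card_image_of_injOn hinj, hSidesCard,
        Finset.card_sdiff_of_subset (Finset.subset_univ X), Finset.card_univ, hcard, hX]
      have : Nat.choose (n + 1) 2 = Nat.choose n 1 + Nat.choose n 2 := Nat.choose_succ_succ n 1
      rw [Nat.choose_one_right] at this
      omega
  have hcmem : c ∈ Sides.image f := by
    rw [himage]; exact Finset.mem_sdiff.mpr ⟨Finset.mem_univ _, hc⟩
  obtain ⟨L, hL, hfL⟩ := Finset.mem_image.mp hcmem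
  exact ⟨L, ⟨(Finset.mem_filter.mp hL).1, (Finset.mem_filter.mp hL).2⟩, hfL ▸ (hfmem L hL).1⟩

/-- If two freely contained K_n-graphs meet in the vertex p, then
every side of the first graph avoiding p crosses exactly one side of the second
graph avoiding p, the intersection point lying outside X₁ ∪ X₂. -/
theorem stmt_6 (n : ℕ) (S : Type) [Fintype S] [DecidableEq S] (M : PSTS S)
    (hM : IsBinomial M (n + 1)) (X₁ X₂ : Finset S)
    (h1 : X₁.card = n) (h2 : X₂.card = n)
    (hf1 : FreelyContains M X₁) (hf2 : FreelyContains M X₂)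
    (p : S) (hp : X₁ ∩ X₂ = {p}) :
    ∀ L₁ : Finset S, IsSide M X₁ L₁ → p ∉ L₁ →
      ∃! L₂ : Finset S, IsSide M X₂ L₂ ∧ p ∉ L₂ ∧
        ∃ u, u ∈ L₁ ∧ u ∈ L₂ ∧ u ∉ X₁ ∧ u ∉ X₂ := by
  classical
  intro L₁ hL₁ hpL₁
  have hpmem : p ∈ X₁ ∩ X₂ := hp ▸ Finset.mem_singleton_self p
  have hpX1 : p ∈ X₁ := (Finset.mem_inter.mp hpmem).1
  obtain ⟨hL₁lines, hL₁card⟩ := hL₁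
  have h3 : L₁.card = 3 := M.card3 L₁ hL₁lines
  have hdiff : (L₁ \ X₁).card = 1 := by
    have := Finset.card_inter_add_card_sdiff L₁ X₁
    omega
  obtain ⟨c, hc⟩ := Finset.card_eq_one.mp hdiff
  have hcmem : c ∈ L₁ \ X₁ := hc ▸ Finset.mem_singleton_self c
  have hcL₁ : c ∈ L₁ := (Finset.mem_sdiff.mp hcmem).1
  have hcX₁ : c ∉ X₁ := (Finset.mem_sdiff.mp hcmem).2
  have hcX₂ : c ∉ X₂ := by
    intro hcX₂
    have hside := aux_lines_through_vertex M hM h2 hf2 hcX₂ L₁ hL₁lines hcL₁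
    have hcin : c ∈ L₁ ∩ X₂ := Finset.mem_inter.mpr ⟨hcL₁, hcX₂⟩
    obtain ⟨d, hd, hdc⟩ := Finset.exists_mem_ne (by omega : 1 < (L₁ ∩ X₂).card) c
    have hdL₁ : d ∈ L₁ := (Finset.mem_inter.mp hd).1
    have hdX₁ : d ∈ X₁ := by
      by_contra h
      have : d ∈ L₁ \ X₁ := Finset.mem_sdiff.mpr ⟨hdL₁, h⟩
      rw [hc] at this
      exact hdc (Finset.mem_singleton.mp this)
    have hdp : d ∈ X₁ ∩ X₂ := Finset.mem_inter.mpr ⟨hdX₁, (Finset.mem_inter.mp hd).2⟩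
    rw [hp] at hdp
    exact hpL₁ ((Finset.mem_singleton.mp hdp) ▸ hdL₁)
  obtain ⟨L₂, hL₂side, hcL₂⟩ := aux_exists_side_through M hM.1 h2 hf2 hcX₂
  have hpL₂ : p ∉ L₂ := by
    intro hpL₂
    have hsideX₁ : (L₂ ∩ X₁).card = 2 :=
      aux_lines_through_vertex M hM h1 hf1 hpX1 L₂ hL₂side.1 hpL₂
    have hne : L₁ ≠ L₂ := fun h => hpL₁ (h ▸ hpL₂)
    exact hcX₁ (hf1.2 L₁ L₂ ⟨hL₁lines, hL₁card⟩ ⟨hL₂side.1, hsideX₁⟩ hne c hcL₁ hcL₂)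
  refine ⟨L₂, ⟨hL₂side, hpL₂, c, hcL₁, hcL₂, hcX₁, hcX₂⟩, ?_⟩
  rintro L₂' ⟨hL₂'side, hpL₂', u, huL₁, huL₂', huX₁, huX₂⟩
  have huc : u = c := by
    have : u ∈ L₁ \ X₁ := Finset.mem_sdiff.mpr ⟨huL₁, huX₁⟩
    rw [hc] at this
    exact Finset.mem_singleton.mp this
  by_contra hne
  exact hcX₂ (hf2.2 L₂' L₂ hL₂'side hL₂side hne c (huc ▸ huL₂') hcL₂)
end

section
/- Let X_1, X_2, X_3 be the vertex sets of three pairwise distinct K_n-graphs freely contained in a binomial B(n+1)-configuration M, and for {k,i,j} = {1,2,3} let c_k be the unique common vertex of X_i and X_j. Then {c_1, c_2, c_3} is a line of M. -/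
open Finset

lemma pair_eq {S : Type} [DecidableEq S] {u v : S} (hne : u ≠ v) {T : Finset S}
    (hT : T.card = 2) (hu : u ∈ T) (hv : v ∈ T) : T = {u, v} := by
  refine (Finset.eq_of_subset_of_card_le
    (Finset.insert_subset hu (Finset.singleton_subset_iff.mpr hv)) ?_).symm
  rw [hT, Finset.card_pair hne]

/-- Every line through a vertex of a freely contained Kₙ-graph is a side. -/
lemma side_of_mem {S : Type} [Fintype S] [DecidableEq S] {n : ℕ} {M : PSTS S}
    (hM : IsBinomial M (n + 1)) {X : Finset S} (hX : X.card = n)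
    (hf : FreelyContains M X) {p : S} (hp : p ∈ X) {L : Finset S}
    (hL : L ∈ M.lines) (hpL : p ∈ L) : (L ∩ X).card = 2 := by
  classical
  have hex : ∀ a ∈ X.erase p, ∃ L' ∈ M.lines, p ∈ L' ∧ a ∈ L' ∧ (L' ∩ X).card = 2 := by
    intro a ha
    obtain ⟨ha1, ha2⟩ := Finset.mem_erase.mp ha
    obtain ⟨L', hL', hpL', haL', hcard⟩ := hf.1 p hp a ha2 (Ne.symm ha1)
    exact ⟨L', hL', hpL', haL', hcard⟩
  set t := M.lines.filter (fun L => p ∈ L) with ht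
  have htc : t.card = n - 1 := by
    have := hM.2.2 p
    unfold pointRank at this
    simpa using this
  have hsc : (X.erase p).card = n - 1 := by rw [Finset.card_erase_of_mem hp, hX]
  set f : ∀ a ∈ X.erase p, Finset S := fun a ha => (hex a ha).choose with hfdef
  have hfmem : ∀ a ha, f a ha ∈ t := by
    intro a ha
    obtain ⟨h1, h2, _, _⟩ := (hex a ha).choose_spec
    exact Finset.mem_filter.mpr ⟨h1, h2⟩
  have hfaX : ∀ a ha, f a ha ∩ X = {p, a} := by
    intro a ha
    obtain ⟨_, h2, h3, h4⟩ := (hex a ha).choose_spec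
    obtain ⟨ha1, ha2⟩ := Finset.mem_erase.mp ha
    exact pair_eq (Ne.symm ha1) h4 (Finset.mem_inter.mpr ⟨h2, hp⟩)
      (Finset.mem_inter.mpr ⟨h3, ha2⟩)
  have hinj : ∀ a₁ a₂ ha₁ ha₂, f a₁ ha₁ = f a₂ ha₂ → a₁ = a₂ := by
    intro a₁ a₂ ha₁ ha₂ h
    have := (hfaX a₁ ha₁).symm.trans (h ▸ hfaX a₂ ha₂)
    have ha1 := (Finset.mem_erase.mp ha₁).1
    have : a₁ ∈ ({p, a₂} : Finset S) := this ▸ (by simp)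
    simp only [Finset.mem_insert, Finset.mem_singleton] at this
    tauto
  have hsurj := Finset.surj_on_of_inj_on_of_card_le f hfmem hinj (by omega)
  obtain ⟨a, ha, hfa⟩ := hsurj L (Finset.mem_filter.mpr ⟨hL, hpL⟩)
  rw [hfa, hfaX a ha, Finset.card_pair (Ne.symm (Finset.mem_erase.mp ha).1)]

/-- Three pairwise distinct freely contained Kₙ-graphs with singleton pairwise
intersections have no common vertex (for n ≥ 2). -/
lemma no_common_vertex {S : Type} [Fintype S] [DecidableEq S] {n : ℕ} {M : PSTS S}
    (hM : IsBinomial M (n + 1)) {X₁ X₂ X₃ : Finset S}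
    (h1 : X₁.card = n) (h2 : X₂.card = n) (h3 : X₃.card = n)
    (hf1 : FreelyContains M X₁) (hf2 : FreelyContains M X₂)
    (hf3 : FreelyContains M X₃) {c₁ c₂ c₃ : S}
    (hc3 : X₁ ∩ X₂ = {c₃}) (hc2 : X₁ ∩ X₃ = {c₂}) (hc1 : X₂ ∩ X₃ = {c₁})
    (hn : 2 ≤ n) {p : S} (hp1 : p ∈ X₁) (hp2 : p ∈ X₂) (hp3 : p ∈ X₃) : False := by
  classical
  obtain ⟨a, ha, hap⟩ := Finset.exists_mem_ne (by omega : 1 < X₁.card) p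
  obtain ⟨L, hL, hpL, haL, hLX1⟩ := hf1.1 p hp1 a ha (Ne.symm hap)
  have hX1 : L ∩ X₁ = {p, a} := pair_eq (Ne.symm hap) hLX1
    (Finset.mem_inter.mpr ⟨hpL, hp1⟩) (Finset.mem_inter.mpr ⟨haL, ha⟩)
  have hLX2 : (L ∩ X₂).card = 2 := side_of_mem hM h2 hf2 hp2 hL hpL
  have hLX3 : (L ∩ X₃).card = 2 := side_of_mem hM h3 hf3 hp3 hL hpL
  obtain ⟨b, hb, hbp⟩ := Finset.exists_mem_ne (by omega : 1 < (L ∩ X₂).card) p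
  obtain ⟨d, hd, hdp⟩ := Finset.exists_mem_ne (by omega : 1 < (L ∩ X₃).card) p
  obtain ⟨hbL, hbX2⟩ := Finset.mem_inter.mp hb
  obtain ⟨hdL, hdX3⟩ := Finset.mem_inter.mp hd
  have hbX1 : b ∉ X₁ := by
    intro h
    have e1 : b = c₃ := Finset.mem_singleton.mp (hc3 ▸ Finset.mem_inter.mpr ⟨h, hbX2⟩)
    have e2 : p = c₃ := Finset.mem_singleton.mp (hc3 ▸ Finset.mem_inter.mpr ⟨hp1, hp2⟩)
    exact hbp (e1.trans e2.symm)
  have hdX1 : d ∉ X₁ := by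
    intro h
    have e1 : d = c₂ := Finset.mem_singleton.mp (hc2 ▸ Finset.mem_inter.mpr ⟨h, hdX3⟩)
    have e2 : p = c₂ := Finset.mem_singleton.mp (hc2 ▸ Finset.mem_inter.mpr ⟨hp1, hp3⟩)
    exact hdp (e1.trans e2.symm)
  have hdX2 : d ∉ X₂ := by
    intro h
    have e1 : d = c₁ := Finset.mem_singleton.mp (hc1 ▸ Finset.mem_inter.mpr ⟨h, hdX3⟩)
    have e2 : p = c₁ := Finset.mem_singleton.mp (hc1 ▸ Finset.mem_inter.mpr ⟨hp2, hp3⟩)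
    exact hdp (e1.trans e2.symm)
  have hab : a ≠ b := fun h => hbX1 (h ▸ ha)
  have had : a ≠ d := fun h => hdX1 (h ▸ ha)
  have hbd : b ≠ d := fun h => hdX2 (h ▸ hbX2)
  have hsub : ({p, a, b, d} : Finset S) ⊆ L := by
    intro x hx
    simp only [Finset.mem_insert, Finset.mem_singleton] at hx
    rcases hx with rfl | rfl | rfl | rfl <;> assumption
  have hcard4 : ({p, a, b, d} : Finset S).card = 4 := by
    rw [Finset.card_insert_of_notMem (by simp [Ne.symm hap, Ne.symm hbp, Ne.symm hdp]),
      Finset.card_insert_of_notMem (by simp [hab, had]), Finset.card_pair hbd]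
  have := Finset.card_le_card hsub
  rw [hcard4, M.card3 L hL] at this
  omega

/-- For three pairwise distinct freely contained K_n-graphs with
pairwise common vertices c₁, c₂, c₃, the set {c₁,c₂,c₃} is a line of M. -/
theorem stmt_7 (n : ℕ) (S : Type) [Fintype S] [DecidableEq S] (M : PSTS S)
    (hM : IsBinomial M (n + 1)) (X₁ X₂ X₃ : Finset S)
    (h1 : X₁.card = n) (h2 : X₂.card = n) (h3 : X₃.card = n)
    (hf1 : FreelyContains M X₁) (hf2 : FreelyContains M X₂)
    (hf3 : FreelyContains M X₃)
    (h12 : X₁ ≠ X₂) (h13 : X₁ ≠ X₃) (h23 : X₂ ≠ X₃)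
    (c₁ c₂ c₃ : S)
    (hc3 : X₁ ∩ X₂ = {c₃}) (hc2 : X₁ ∩ X₃ = {c₂}) (hc1 : X₂ ∩ X₃ = {c₁}) :
    ({c₁, c₂, c₃} : Finset S) ∈ M.lines := by
  classical
  have hc₃1 : c₃ ∈ X₁ := (Finset.mem_inter.mp (hc3 ▸ Finset.mem_singleton_self c₃)).1
  have hc₃2 : c₃ ∈ X₂ := (Finset.mem_inter.mp (hc3 ▸ Finset.mem_singleton_self c₃)).2
  have hc₂1 : c₂ ∈ X₁ := (Finset.mem_inter.mp (hc2 ▸ Finset.mem_singleton_self c₂)).1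
  have hc₂3 : c₂ ∈ X₃ := (Finset.mem_inter.mp (hc2 ▸ Finset.mem_singleton_self c₂)).2
  have hc₁2 : c₁ ∈ X₂ := (Finset.mem_inter.mp (hc1 ▸ Finset.mem_singleton_self c₁)).1
  have hc₁3 : c₁ ∈ X₃ := (Finset.mem_inter.mp (hc1 ▸ Finset.mem_singleton_self c₁)).2
  have hn : 2 ≤ n := by
    by_contra h
    have e1 : X₁ = {c₃} := (Finset.eq_of_subset_of_card_le
      (Finset.singleton_subset_iff.mpr hc₃1) (by rw [h1, Finset.card_singleton]; omega)).symm
    have e2 : X₂ = {c₃} := (Finset.eq_of_subset_of_card_le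
      (Finset.singleton_subset_iff.mpr hc₃2) (by rw [h2, Finset.card_singleton]; omega)).symm
    exact h12 (e1.trans e2.symm)
  have hnc : ∀ p, p ∈ X₁ → p ∈ X₂ → p ∈ X₃ → False := fun p hp1 hp2 hp3 =>
    no_common_vertex hM h1 h2 h3 hf1 hf2 hf3 hc3 hc2 hc1 hn hp1 hp2 hp3
  have hne13 : c₁ ≠ c₃ := fun h => hnc c₁ (h ▸ hc₃1) hc₁2 hc₁3
  have hc₁n1 : c₁ ∉ X₁ := fun h => hnc c₁ h hc₁2 hc₁3
  have hc₃n3 : c₃ ∉ X₃ := fun h => hnc c₃ hc₃1 hc₃2 h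
  obtain ⟨L, hL, hc1L, hc3L, hLX2⟩ := hf2.1 c₁ hc₁2 c₃ hc₃2 hne13
  have hLX1 : (L ∩ X₁).card = 2 := side_of_mem hM h1 hf1 hc₃1 hL hc3L
  obtain ⟨x, hx, hxc3⟩ := Finset.exists_mem_ne
    (by omega : 1 < (L ∩ X₁).card) c₃
  obtain ⟨hxL, hxX1⟩ := Finset.mem_inter.mp hx
  have hxc1 : x ≠ c₁ := fun h => hc₁n1 (h ▸ hxX1)
  have hLeq : L = {c₁, c₃, x} := by
    refine (Finset.eq_of_subset_of_card_le ?_ ?_).symm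
    · intro y hy
      simp only [Finset.mem_insert, Finset.mem_singleton] at hy
      rcases hy with rfl | rfl | rfl <;> assumption
    · rw [M.card3 L hL, Finset.card_insert_of_notMem (by simp [hne13, Ne.symm hxc1]),
        Finset.card_pair (Ne.symm hxc3)]
  have hLX3 : (L ∩ X₃).card = 2 := side_of_mem hM h3 hf3 hc₁3 hL hc1L
  obtain ⟨y, hy, hyc1⟩ := Finset.exists_mem_ne
    (by omega : 1 < (L ∩ X₃).card) c₁
  obtain ⟨hyL, hyX3⟩ := Finset.mem_inter.mp hy
  have hyc3 : y ≠ c₃ := fun h => hc₃n3 (h ▸ hyX3)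
  have hyx : y = x := by
    rw [hLeq] at hyL
    simp only [Finset.mem_insert, Finset.mem_singleton] at hyL
    tauto
  have hxc2 : x = c₂ := Finset.mem_singleton.mp
    (hc2 ▸ Finset.mem_inter.mpr ⟨hxX1, hyx ▸ hyX3⟩)
  have : ({c₁, c₂, c₃} : Finset S) = L := by
    rw [hLeq, hxc2]; ext z; simp only [Finset.mem_insert, Finset.mem_singleton]; tauto
  rw [this]; exact hL
end

section
/- Two distinct complete K_n-graphs freely contained in a binomial B(n+1)-configuration have exactly n-1 common sides (lines of M extending an edge of both graphs); three pairwise distinct freely contained K_n-graphs have exactly one side common to all three. -/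
open Finset

section Aux

variable {S : Type} [Fintype S] [DecidableEq S] {M : PSTS S} {n : ℕ}

private lemma triple_card {a b c : S} (hab : a ≠ b) (hac : a ≠ c) (hbc : b ≠ c) :
    ({a, b, c} : Finset S).card = 3 := by
  rw [Finset.card_insert_of_notMem (by simp [hab, hac]),
    Finset.card_insert_of_notMem (by simp [hbc]), Finset.card_singleton]

/-- Every line of `M` through a vertex of a freely contained `K_n` is a side. -/
private lemma lemA (hM : IsBinomial M (n + 1)) {X : Finset S} (hX : X.card = n)
    (hfc : FreelyContains M X) :
    ∀ p ∈ X, ∀ L ∈ M.lines, p ∈ L → (L ∩ X).card = 2 := by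
  classical
  intro p hp L₀ hL₀ hpL₀
  set T := M.lines.filter (fun L => p ∈ L) with hTdef
  have hT : T.card = n - 1 := by
    have := hM.2.2 p
    simpa [pointRank, hTdef] using this
  set G := T.filter (fun L => (L ∩ X).card = 2) with hGdef
  have hle : (X.erase p).card ≤ G.card := by
    refine Finset.card_le_card_of_injOn
      (fun b => if h : b ∈ X ∧ b ≠ p then
        (hfc.1 p hp b h.1 (Ne.symm h.2)).choose else ∅) ?_ ?_
    · intro b hb
      have hb' : b ∈ X ∧ b ≠ p := ⟨Finset.mem_of_mem_erase hb, Finset.ne_of_mem_erase hb⟩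
      simp only [dif_pos hb']
      obtain ⟨h1, h2, _, h4⟩ := (hfc.1 p hp b hb'.1 (Ne.symm hb'.2)).choose_spec
      simp only [hGdef, hTdef, Finset.mem_filter, Finset.mem_coe]
      exact ⟨⟨h1, h2⟩, h4⟩
    · intro b₁ hb₁ b₂ hb₂ heq
      simp only [Finset.mem_coe] at hb₁ hb₂
      have hb₁' : b₁ ∈ X ∧ b₁ ≠ p := ⟨Finset.mem_of_mem_erase hb₁, Finset.ne_of_mem_erase hb₁⟩
      have hb₂' : b₂ ∈ X ∧ b₂ ≠ p := ⟨Finset.mem_of_mem_erase hb₂, Finset.ne_of_mem_erase hb₂⟩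
      simp only [dif_pos hb₁', dif_pos hb₂'] at heq
      obtain ⟨_, hp1, hm1, hc1⟩ := (hfc.1 p hp b₁ hb₁'.1 (Ne.symm hb₁'.2)).choose_spec
      obtain ⟨_, _, hm2, _⟩ := (hfc.1 p hp b₂ hb₂'.1 (Ne.symm hb₂'.2)).choose_spec
      by_contra hne
      have hsub : ({p, b₁, b₂} : Finset S) ⊆
          (hfc.1 p hp b₁ hb₁'.1 (Ne.symm hb₁'.2)).choose ∩ X := by
        intro x hx
        rw [Finset.mem_insert, Finset.mem_insert, Finset.mem_singleton] at hx
        rcases hx with rfl | rfl | rfl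
        · exact Finset.mem_inter.2 ⟨hp1, hp⟩
        · exact Finset.mem_inter.2 ⟨hm1, hb₁'.1⟩
        · exact Finset.mem_inter.2 ⟨heq ▸ hm2, hb₂'.1⟩
      have := Finset.card_le_card hsub
      rw [triple_card (Ne.symm hb₁'.2) (Ne.symm hb₂'.2) hne, hc1] at this
      omega
  have hGsub : G ⊆ T := Finset.filter_subset _ _
  have hcard : (X.erase p).card = n - 1 := by
    rw [Finset.card_erase_of_mem hp, hX]
  have hGT : G = T := Finset.eq_of_subset_of_card_le hGsub (by omega)
  have hL₀T : L₀ ∈ T := Finset.mem_filter.2 ⟨hL₀, hpL₀⟩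
  have := hGT ▸ hL₀T
  exact (Finset.mem_filter.1 this).2

/-- The sides of a freely contained `K_n` are in bijection with the edges. -/
private lemma lemSides (hM : IsBinomial M (n + 1)) {X : Finset S} (hX : X.card = n)
    (hfc : FreelyContains M X) :
    (M.lines.filter (fun L => (L ∩ X).card = 2)).card = n.choose 2 := by
  classical
  rw [← hX, ← Finset.card_powersetCard 2 X]
  refine Finset.card_bij (fun L _ => L ∩ X) ?_ ?_ ?_
  · intro L hL
    rw [Finset.mem_powersetCard]
    exact ⟨Finset.inter_subset_right, (Finset.mem_filter.1 hL).2⟩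
  · intro L₁ hL₁ L₂ hL₂ heq
    obtain ⟨hm₁, hc₁⟩ := Finset.mem_filter.1 hL₁
    obtain ⟨hm₂, _⟩ := Finset.mem_filter.1 hL₂
    obtain ⟨a, b, hab, hset⟩ := Finset.card_eq_two.1 hc₁
    have ha₁ : a ∈ L₁ ∩ X := hset ▸ Finset.mem_insert_self a {b}
    have hb₁ : b ∈ L₁ ∩ X := hset ▸ Finset.mem_insert_of_mem (Finset.mem_singleton_self b)
    have heq' : L₁ ∩ X = L₂ ∩ X := heq
    have ha₂ : a ∈ L₂ ∩ X := heq' ▸ ha₁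
    have hb₂ : b ∈ L₂ ∩ X := heq' ▸ hb₁
    exact M.unique L₁ hm₁ L₂ hm₂ a b hab (Finset.mem_inter.1 ha₁).1
      (Finset.mem_inter.1 hb₁).1 (Finset.mem_inter.1 ha₂).1 (Finset.mem_inter.1 hb₂).1
  · intro e he
    rw [Finset.mem_powersetCard] at he
    obtain ⟨a, b, hab, rfl⟩ := Finset.card_eq_two.1 he.2
    have haX : a ∈ X := he.1 (Finset.mem_insert_self a {b})
    have hbX : b ∈ X := he.1 (Finset.mem_insert_of_mem (Finset.mem_singleton_self b))
    obtain ⟨L, hL, haL, hbL, hcL⟩ := hfc.1 a haX b hbX hab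
    refine ⟨L, Finset.mem_filter.2 ⟨hL, hcL⟩, ?_⟩
    have hsub : ({a, b} : Finset S) ⊆ L ∩ X := by
      intro x hx
      rw [Finset.mem_insert, Finset.mem_singleton] at hx
      rcases hx with rfl | rfl
      · exact Finset.mem_inter.2 ⟨haL, haX⟩
      · exact Finset.mem_inter.2 ⟨hbL, hbX⟩
    exact (Finset.eq_of_subset_of_card_le hsub
      (by rw [hcL, Finset.card_insert_of_notMem (by simp [hab]), Finset.card_singleton])).symm

/-- Every point outside a freely contained `K_n` lies on a side. -/
private lemma lemB (hM : IsBinomial M (n + 1)) {X : Finset S} (hX : X.card = n)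
    (hfc : FreelyContains M X) :
    ∀ a : S, a ∉ X → ∃ L ∈ M.lines, a ∈ L ∧ (L ∩ X).card = 2 := by
  classical
  intro a ha
  by_contra hcon
  push_neg at hcon
  have hS : (M.lines.filter (fun L => (L ∩ X).card = 2)).card = n.choose 2 :=
    lemSides hM hX hfc
  set B := ((Finset.univ \ X).erase a).image (fun x => ({x} : Finset S)) with hBdef
  have hthird : ∀ L ∈ M.lines.filter (fun L => (L ∩ X).card = 2),
      ∃ c, (L \ X) = {c} ∧ c ∉ X ∧ c ∈ L ∧ c ≠ a := by
    intro L hL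
    obtain ⟨hm, hc⟩ := Finset.mem_filter.1 hL
    have h3 := M.card3 L hm
    have hcd : (L \ X).card = 1 := by
      have := Finset.card_inter_add_card_sdiff L X
      omega
    obtain ⟨c, hc1⟩ := Finset.card_eq_one.1 hcd
    have hcL : c ∈ L \ X := hc1 ▸ Finset.mem_singleton_self c
    rw [Finset.mem_sdiff] at hcL
    refine ⟨c, hc1, hcL.2, hcL.1, ?_⟩
    rintro rfl
    exact hcon L hm hcL.1 hc
  have hle : (M.lines.filter (fun L => (L ∩ X).card = 2)).card ≤ B.card := by
    refine Finset.card_le_card_of_injOn (fun L => L \ X) ?_ ?_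
    · intro L hL
      obtain ⟨c, hc1, hc2, _, hc4⟩ := hthird L hL
      rw [hBdef]
      refine Finset.mem_image.2 ⟨c, ?_, hc1.symm⟩
      rw [Finset.mem_erase, Finset.mem_sdiff]
      exact ⟨hc4, Finset.mem_univ c, hc2⟩
    · intro L₁ hL₁ L₂ hL₂ heq
      simp only [Finset.mem_coe] at hL₁ hL₂
      obtain ⟨c, hc1, hc2, hc3, _⟩ := hthird L₁ hL₁
      by_contra hne
      obtain ⟨hm₁, hs₁⟩ := Finset.mem_filter.1 hL₁
      obtain ⟨hm₂, hs₂⟩ := Finset.mem_filter.1 hL₂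
      have heq' : L₁ \ X = L₂ \ X := heq
      have hcL₂ : c ∈ L₂ := by
        have : c ∈ L₂ \ X := heq' ▸ (hc1 ▸ Finset.mem_singleton_self c : c ∈ L₁ \ X)
        exact (Finset.mem_sdiff.1 this).1
      exact hc2 (hfc.2 L₁ L₂ ⟨hm₁, hs₁⟩ ⟨hm₂, hs₂⟩ hne c hc3 hcL₂)
  have hBcard : B.card = (Finset.univ : Finset S).card - n - 1 := by
    rw [hBdef, Finset.card_image_of_injective _ Finset.singleton_injective,
      Finset.card_erase_of_mem (by rw [Finset.mem_sdiff]; exact ⟨Finset.mem_univ a, ha⟩),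
      Finset.card_sdiff_of_subset (Finset.subset_univ X), hX]
  have huniv : (Finset.univ : Finset S).card = n + n.choose 2 := by
    rw [Finset.card_univ, hM.1]
    rw [Nat.choose_succ_succ, Nat.choose_one_right]
  have hch0 : n.choose 2 = 0 := by omega
  have hn1 : n ≤ 1 := by
    by_contra h
    have : 0 < n.choose 2 := Nat.choose_pos (by omega)
    omega
  interval_cases n
  · have : (Finset.univ : Finset S).card = 0 := by omega
    exact absurd (Finset.card_eq_zero.1 this ▸ Finset.mem_univ a) (Finset.notMem_empty a)
  · have hcS : Fintype.card S = 1 := by rw [hM.1]; decide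
    have hXu : X = Finset.univ := Finset.eq_univ_of_card X (by rw [hX, hcS])
    exact ha (hXu ▸ Finset.mem_univ a)

/-- Two side intersections of a line must meet. -/
private lemma lemMeet {L X₁ X₂ : Finset S} (hL : L.card = 3)
    (h₁ : (L ∩ X₁).card = 2) (h₂ : (L ∩ X₂).card = 2) :
    ∃ c, c ∈ L ∧ c ∈ X₁ ∧ c ∈ X₂ := by
  have hsub : (L ∩ X₁) ∪ (L ∩ X₂) ⊆ L :=
    Finset.union_subset Finset.inter_subset_left Finset.inter_subset_left
  have h1 := Finset.card_le_card hsub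
  have h2 := Finset.card_union_add_card_inter (L ∩ X₁) (L ∩ X₂)
  have hpos : 0 < ((L ∩ X₁) ∩ (L ∩ X₂)).card := by omega
  obtain ⟨c, hc⟩ := Finset.card_pos.1 hpos
  rw [Finset.mem_inter, Finset.mem_inter, Finset.mem_inter] at hc
  exact ⟨c, hc.1.1, hc.1.2, hc.2.2⟩

/-- Two distinct freely contained `K_n`-graphs share exactly one vertex. -/
private lemma lemK (hM : IsBinomial M (n + 1)) {X₁ X₂ : Finset S}
    (hX₁ : X₁.card = n) (hX₂ : X₂.card = n)
    (hf₁ : FreelyContains M X₁) (hf₂ : FreelyContains M X₂)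
    (hne : X₁ ≠ X₂) (hn : 1 ≤ n) : ∃ p, X₁ ∩ X₂ = {p} := by
  classical
  have hnonempty : (X₁ ∩ X₂).Nonempty := by
    obtain ⟨a, ha⟩ := Finset.card_pos.1 (hX₁ ▸ hn : 0 < X₁.card)
    by_cases haX₂ : a ∈ X₂
    · exact ⟨a, Finset.mem_inter.2 ⟨ha, haX₂⟩⟩
    · obtain ⟨L, hL, haL, hcL⟩ := lemB hM hX₂ hf₂ a haX₂
      have hc1 : (L ∩ X₁).card = 2 := lemA hM hX₁ hf₁ a ha L hL haL
      obtain ⟨c, _, hc₁, hc₂⟩ := lemMeet (M.card3 L hL) hc1 hcL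
      exact ⟨c, Finset.mem_inter.2 ⟨hc₁, hc₂⟩⟩
  have hone : (X₁ ∩ X₂).card ≤ 1 := by
    rw [Finset.card_le_one]
    intro p hp q hq
    by_contra hpq
    rw [Finset.mem_inter] at hp hq
    have hX₁X₂ : ¬ X₁ ⊆ X₂ := fun h => hne (Finset.eq_of_subset_of_card_le h (by omega))
    obtain ⟨a, haX₁, haX₂⟩ := Finset.not_subset.1 hX₁X₂
    have hap : a ≠ p := fun h => haX₂ (h ▸ hp.2)
    have haq : a ≠ q := fun h => haX₂ (h ▸ hq.2)
    obtain ⟨L₁, hL₁, haL₁, hpL₁, hcL₁⟩ := hf₁.1 a haX₁ p hp.1 hap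
    obtain ⟨L₂, hL₂, haL₂, hqL₂, hcL₂⟩ := hf₁.1 a haX₁ q hq.1 haq
    have hs₁ : (L₁ ∩ X₂).card = 2 := lemA hM hX₂ hf₂ p hp.2 L₁ hL₁ hpL₁
    have hs₂ : (L₂ ∩ X₂).card = 2 := lemA hM hX₂ hf₂ q hq.2 L₂ hL₂ hqL₂
    by_cases hLL : L₁ = L₂
    · subst hLL
      have hsub : ({a, p, q} : Finset S) ⊆ L₁ ∩ X₁ := by
        intro x hx
        rw [Finset.mem_insert, Finset.mem_insert, Finset.mem_singleton] at hx
        rcases hx with rfl | rfl | rfl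
        · exact Finset.mem_inter.2 ⟨haL₁, haX₁⟩
        · exact Finset.mem_inter.2 ⟨hpL₁, hp.1⟩
        · exact Finset.mem_inter.2 ⟨hqL₂, hq.1⟩
      have := Finset.card_le_card hsub
      rw [triple_card hap haq hpq, hcL₁] at this
      omega
    · exact haX₂ (hf₂.2 L₁ L₂ ⟨hL₁, hs₁⟩ ⟨hL₂, hs₂⟩ hLL a haL₁ haL₂)
  exact Finset.card_eq_one.1 (le_antisymm hone hnonempty.card_pos)

/-- Characterization of common sides: the lines through the common vertex. -/
private lemma commonChar (hM : IsBinomial M (n + 1)) {X₁ X₂ : Finset S} {p : S}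
    (hX₁ : X₁.card = n) (hX₂ : X₂.card = n)
    (hf₁ : FreelyContains M X₁) (hf₂ : FreelyContains M X₂)
    (hp : X₁ ∩ X₂ = {p}) :
    ∀ L ∈ M.lines, (IsSide M X₁ L ∧ IsSide M X₂ L) ↔ p ∈ L := by
  intro L hL
  have hpX : p ∈ X₁ ∩ X₂ := hp ▸ Finset.mem_singleton_self p
  rw [Finset.mem_inter] at hpX
  constructor
  · rintro ⟨⟨_, h₁⟩, ⟨_, h₂⟩⟩
    obtain ⟨c, hcL, hc₁, hc₂⟩ := lemMeet (M.card3 L hL) h₁ h₂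
    have : c ∈ ({p} : Finset S) := hp ▸ Finset.mem_inter.2 ⟨hc₁, hc₂⟩
    rw [Finset.mem_singleton] at this
    exact this ▸ hcL
  · intro hpL
    exact ⟨⟨hL, lemA hM hX₁ hf₁ p hpX.1 L hL hpL⟩, ⟨hL, lemA hM hX₂ hf₂ p hpX.2 L hL hpL⟩⟩

end Aux

/-- Two distinct freely contained K_n-graphs have exactly n-1
common sides; three pairwise distinct ones have exactly one common side. -/
theorem stmt_8 (n : ℕ) (S : Type) [Fintype S] [DecidableEq S] (M : PSTS S)
    (hM : IsBinomial M (n + 1)) :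
    (∀ X₁ X₂ : Finset S, X₁.card = n → X₂.card = n →
      FreelyContains M X₁ → FreelyContains M X₂ → X₁ ≠ X₂ →
      (M.lines.filter (fun L => IsSide M X₁ L ∧ IsSide M X₂ L)).card = n - 1) ∧
    (∀ X₁ X₂ X₃ : Finset S, X₁.card = n → X₂.card = n → X₃.card = n →
      FreelyContains M X₁ → FreelyContains M X₂ → FreelyContains M X₃ →
      X₁ ≠ X₂ → X₁ ≠ X₃ → X₂ ≠ X₃ →
      (M.lines.filter
        (fun L => IsSide M X₁ L ∧ IsSide M X₂ L ∧ IsSide M X₃ L)).card = 1) := by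
  classical
  have key1 : ∀ X₁ X₂ : Finset S, X₁.card = n → X₂.card = n →
      FreelyContains M X₁ → FreelyContains M X₂ → X₁ ≠ X₂ →
      (M.lines.filter (fun L => IsSide M X₁ L ∧ IsSide M X₂ L)).card = n - 1 := by
    intro X₁ X₂ h1 h2 f1 f2 hne
    have hn : 1 ≤ n := by
      rcases Nat.eq_zero_or_pos n with h | h
      · subst h
        exact absurd (by rw [Finset.card_eq_zero.1 h1, Finset.card_eq_zero.1 h2]) hne
      · exact h
    obtain ⟨p, hp⟩ := lemK hM h1 h2 f1 f2 hne hn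
    have heq : M.lines.filter (fun L => IsSide M X₁ L ∧ IsSide M X₂ L) =
        M.lines.filter (fun L => p ∈ L) :=
      Finset.filter_congr (commonChar hM h1 h2 f1 f2 hp)
    rw [heq]
    have := hM.2.2 p
    rw [pointRank] at this
    omega
  refine ⟨key1, ?_⟩
  intro X₁ X₂ X₃ h1 h2 h3 f1 f2 f3 h12 h13 h23
  have hn2 : 2 ≤ n := by
    by_contra hlt
    push_neg at hlt
    interval_cases n
    · exact h12 (by rw [Finset.card_eq_zero.1 h1, Finset.card_eq_zero.1 h2])
    · have hcS : Fintype.card S = 1 := by rw [hM.1]; decide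
      exact h12 ((Finset.eq_univ_of_card X₁ (by rw [h1, hcS])).trans
        (Finset.eq_univ_of_card X₂ (by rw [h2, hcS])).symm)
  obtain ⟨p, hp⟩ := lemK hM h1 h2 f1 f2 h12 (by omega)
  obtain ⟨q, hq⟩ := lemK hM h1 h3 f1 f3 h13 (by omega)
  obtain ⟨r, hr⟩ := lemK hM h2 h3 f2 f3 h23 (by omega)
  have hpX : p ∈ X₁ ∩ X₂ := hp ▸ Finset.mem_singleton_self p
  have hqX : q ∈ X₁ ∩ X₃ := hq ▸ Finset.mem_singleton_self q
  rw [Finset.mem_inter] at hpX hqX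
  have hpq : p ≠ q := by
    rintro rfl
    -- p lies in all three graphs
    have hpX₃ : p ∈ X₃ := hqX.2
    have hr' : X₂ ∩ X₃ = {p} := by
      have : p ∈ ({r} : Finset S) := hr ▸ Finset.mem_inter.2 ⟨hpX.2, hpX₃⟩
      rw [hr, Finset.mem_singleton.1 this]
    -- get a line through p
    have hrank := hM.2.2 p
    rw [pointRank] at hrank
    have hpos : 0 < (M.lines.filter (fun L => p ∈ L)).card := by omega
    obtain ⟨L, hLmem⟩ := Finset.card_pos.1 hpos
    obtain ⟨hL, hpL⟩ := Finset.mem_filter.1 hLmem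
    have hc₁ : (L ∩ X₁).card = 2 := lemA hM h1 f1 p hpX.1 L hL hpL
    have hc₂ : (L ∩ X₂).card = 2 := lemA hM h2 f2 p hpX.2 L hL hpL
    have hc₃ : (L ∩ X₃).card = 2 := lemA hM h3 f3 p hpX₃ L hL hpL
    have hget : ∀ X : Finset S, (L ∩ X).card = 2 → p ∈ X →
        ∃ a, a ∈ L ∧ a ∈ X ∧ a ≠ p := by
      intro X hcX hpX'
      have hpin : p ∈ L ∩ X := Finset.mem_inter.2 ⟨hpL, hpX'⟩
      have : 0 < ((L ∩ X).erase p).card := by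
        rw [Finset.card_erase_of_mem hpin, hcX]
        decide
      obtain ⟨a, ha⟩ := Finset.card_pos.1 this
      rw [Finset.mem_erase, Finset.mem_inter] at ha
      exact ⟨a, ha.2.1, ha.2.2, ha.1⟩
    obtain ⟨a₁, ha₁L, ha₁X, ha₁p⟩ := hget X₁ hc₁ hpX.1
    obtain ⟨a₂, ha₂L, ha₂X, ha₂p⟩ := hget X₂ hc₂ hpX.2
    obtain ⟨a₃, ha₃L, ha₃X, ha₃p⟩ := hget X₃ hc₃ hpX₃
    have h12' : a₁ ≠ a₂ := by
      rintro rfl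
      exact ha₁p (Finset.mem_singleton.1 (hp ▸ Finset.mem_inter.2 ⟨ha₁X, ha₂X⟩))
    have h13' : a₁ ≠ a₃ := by
      rintro rfl
      exact ha₁p (Finset.mem_singleton.1 (hq ▸ Finset.mem_inter.2 ⟨ha₁X, ha₃X⟩))
    have h23' : a₂ ≠ a₃ := by
      rintro rfl
      exact ha₂p (Finset.mem_singleton.1 (hr' ▸ Finset.mem_inter.2 ⟨ha₂X, ha₃X⟩))
    have hsub : ({a₁, a₂, a₃} : Finset S) ⊆ L.erase p := by
      intro x hx
      rw [Finset.mem_insert, Finset.mem_insert, Finset.mem_singleton] at hx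
      rcases hx with rfl | rfl | rfl
      · exact Finset.mem_erase.2 ⟨ha₁p, ha₁L⟩
      · exact Finset.mem_erase.2 ⟨ha₂p, ha₂L⟩
      · exact Finset.mem_erase.2 ⟨ha₃p, ha₃L⟩
    have hle := Finset.card_le_card hsub
    rw [triple_card h12' h13' h23', Finset.card_erase_of_mem hpL, M.card3 L hL] at hle
    omega
  -- the unique line through p and q
  have hqX₁ : q ∈ X₁ := hqX.1
  obtain ⟨L₀, hL₀, hpL₀, hqL₀, _⟩ := f1.1 p hpX.1 q hqX₁ hpq
  rw [Finset.card_eq_one]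
  refine ⟨L₀, ?_⟩
  ext L
  rw [Finset.mem_filter, Finset.mem_singleton]
  constructor
  · rintro ⟨hL, hs₁, hs₂, hs₃⟩
    have hpL : p ∈ L := (commonChar hM h1 h2 f1 f2 hp L hL).1 ⟨hs₁, hs₂⟩
    have hqL : q ∈ L := (commonChar hM h1 h3 f1 f3 hq L hL).1 ⟨hs₁, hs₃⟩
    exact M.unique L hL L₀ hL₀ p q hpq hpL hqL hpL₀ hqL₀
  · rintro rfl
    have hside₁₂ := (commonChar hM h1 h2 f1 f2 hp L hL₀).2 hpL₀
    have hside₁₃ := (commonChar hM h1 h3 f1 f3 hq L hL₀).2 hqL₀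
    exact ⟨hL₀, hside₁₂.1, hside₁₂.2, hside₁₃.2⟩
end

section
/- Let G_1, …, G_m be m pairwise distinct K_n-graphs freely contained in a binomial B(n+1)-configuration M, and for each 2-subset {i,j} of I = {1,…,m} let q^{i,j} be the unique common vertex of G_i and G_j. Then the map {i,j} ↦ q^{i,j} is an embedding of the combinatorial Grassmannian G(I,2) into M: it is injective and maps each line of G(I,2) onto a line of M. -/
open Finset

/-- Every line of `M` through a vertex of a freely contained `K_n` is a side:
it meets the vertex set in exactly two points. -/
lemma lineThroughVertex {S : Type} [Fintype S] [DecidableEq S] (M : PSTS S) (n : ℕ)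
    (hM : IsBinomial M (n + 1)) (X : Finset S) (hX : X.card = n)
    (hF : FreelyContains M X) (a : S) (ha : a ∈ X)
    (L : Finset S) (hL : L ∈ M.lines) (haL : a ∈ L) : (L ∩ X).card = 2 := by
  obtain ⟨h1, _⟩ := hF
  choose! g hg1 hg2 hg3 hg4 using h1
  have key : ∀ b ∈ X.erase a, g a b ∩ X = {a, b} := by
    intro b hb
    have hbX := Finset.mem_of_mem_erase hb
    have hba : a ≠ b := (Finset.ne_of_mem_erase hb).symm
    refine (Finset.eq_of_subset_of_card_le ?_ ?_).symm
    · intro x hx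
      simp only [Finset.mem_insert, Finset.mem_singleton] at hx
      rcases hx with rfl | rfl
      · exact Finset.mem_inter.2 ⟨hg2 x ha b hbX hba, ha⟩
      · exact Finset.mem_inter.2 ⟨hg3 a ha x hbX hba, hbX⟩
    · rw [hg4 a ha b hbX hba, Finset.card_pair hba]
  set F := M.lines.filter (fun L => a ∈ L) with hF
  set T := (X.erase a).image (g a) with hT
  have hTF : T ⊆ F := by
    intro L' hL'
    obtain ⟨b, hb, rfl⟩ := Finset.mem_image.1 hL'
    have hbX := Finset.mem_of_mem_erase hb
    have hba : a ≠ b := (Finset.ne_of_mem_erase hb).symm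
    exact Finset.mem_filter.2 ⟨hg1 a ha b hbX hba, hg2 a ha b hbX hba⟩
  have hTcard : T.card = n - 1 := by
    rw [hT, Finset.card_image_of_injOn, Finset.card_erase_of_mem ha, hX]
    intro b hb b' hb' heq
    have h1 := key b hb
    have h2 := key b' hb'
    rw [heq, h2] at h1
    have : b ∈ ({a, b} : Finset S) := by simp
    rw [← h1] at this
    simp only [Finset.mem_insert, Finset.mem_singleton] at this
    rcases this with rfl | rfl
    · exact absurd rfl (Finset.ne_of_mem_erase hb)
    · rfl
  have hFcard : F.card = n - 1 := by
    have := hM.2.2 a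
    unfold pointRank at this
    rw [hF, this]
    omega
  have hTF' : T = F := Finset.eq_of_subset_of_card_le hTF (by omega)
  have hLF : L ∈ F := Finset.mem_filter.2 ⟨hL, haL⟩
  rw [← hTF'] at hLF
  obtain ⟨b, hb, rfl⟩ := Finset.mem_image.1 hLF
  rw [key b hb, Finset.card_pair ((Finset.ne_of_mem_erase hb).symm)]

/-- No point lies on three pairwise distinct freely contained `K_n`-graphs. -/
lemma no_common_three {S : Type} [Fintype S] [DecidableEq S] (n m : ℕ) (M : PSTS S)
    (hM : IsBinomial M (n + 1)) (X : Fin m → Finset S)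
    (hinj : Function.Injective X) (hcard : ∀ i, (X i).card = n)
    (hfree : ∀ i, FreelyContains M (X i))
    (q : Fin m → Fin m → S)
    (hq : ∀ i j, i ≠ j → X i ∩ X j = {q i j})
    {i j k : Fin m} (hij : i ≠ j) (hik : i ≠ k) (hjk : j ≠ k)
    {p : S} (hpi : p ∈ X i) (hpj : p ∈ X j) (hpk : p ∈ X k) : False := by
  have huniq : ∀ (a b : Fin m), a ≠ b → ∀ x, x ∈ X a → x ∈ X b → x = p →
      ∀ y, y ∈ X a → y ∈ X b → y = p := by
    intro a b hab x hxa hxb hxp y hya hyb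
    have hx : x ∈ X a ∩ X b := Finset.mem_inter.2 ⟨hxa, hxb⟩
    have hy : y ∈ X a ∩ X b := Finset.mem_inter.2 ⟨hya, hyb⟩
    rw [hq a b hab] at hx hy
    simp only [Finset.mem_singleton] at hx hy
    rw [hy, ← hx, hxp]
  have hn2 : 2 ≤ n := by
    by_contra h
    push_neg at h
    interval_cases n
    · have := hcard i
      rw [Finset.card_eq_zero] at this
      rw [this] at hpi
      exact absurd hpi (Finset.notMem_empty p)
    · have h1 : X i = {p} := by
        have := hcard i
        rw [Finset.card_eq_one] at this
        obtain ⟨x, hx⟩ := this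
        rw [hx] at hpi ⊢
        simp only [Finset.mem_singleton] at hpi
        rw [hpi]
      have h2 : X j = {p} := by
        have := hcard j
        rw [Finset.card_eq_one] at this
        obtain ⟨x, hx⟩ := this
        rw [hx] at hpj ⊢
        simp only [Finset.mem_singleton] at hpj
        rw [hpj]
      exact hij (hinj (h1.trans h2.symm))
  obtain ⟨b, hb⟩ : ((X i).erase p).Nonempty := by
    rw [← Finset.card_pos, Finset.card_erase_of_mem hpi, hcard i]
    omega
  have hbXi := Finset.mem_of_mem_erase hb
  have hbp : b ≠ p := Finset.ne_of_mem_erase hb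
  obtain ⟨L, hL, hpL, hbL, hcuti⟩ :=
    (hfree i).1 p hpi b hbXi (fun h => hbp h.symm)
  have hc3 := M.card3 L hL
  have hcutj := lineThroughVertex M n hM (X j) (hcard j) (hfree j) p hpj L hL hpL
  have hcutk := lineThroughVertex M n hM (X k) (hcard k) (hfree k) p hpk L hL hpL
  have h2 : ∀ Y : Finset S, (L ∩ Y).card = 2 → p ∈ Y →
      ∃ u, u ∈ Y ∧ u ∈ L ∧ u ≠ p := by
    intro Y hY hpY
    have hne : ((L ∩ Y).erase p).Nonempty := by
      rw [← Finset.card_pos, Finset.card_erase_of_mem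
        (Finset.mem_inter.2 ⟨hpL, hpY⟩), hY]
      omega
    obtain ⟨u, hu⟩ := hne
    have hu' := Finset.mem_of_mem_erase hu
    exact ⟨u, (Finset.mem_inter.1 hu').2, (Finset.mem_inter.1 hu').1,
      Finset.ne_of_mem_erase hu⟩
  obtain ⟨u, huXi, huL, hup⟩ := h2 (X i) hcuti hpi
  obtain ⟨v, hvXj, hvL, hvp⟩ := h2 (X j) hcutj hpj
  obtain ⟨w, hwXk, hwL, hwp⟩ := h2 (X k) hcutk hpk
  have htwo : u = v ∨ u = w ∨ v = w := by
    by_contra h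
    push_neg at h
    have hsub : ({u, v, w} : Finset S) ⊆ L.erase p := by
      intro x hx
      simp only [Finset.mem_insert, Finset.mem_singleton] at hx
      rcases hx with rfl | rfl | rfl
      · exact Finset.mem_erase.2 ⟨hup, huL⟩
      · exact Finset.mem_erase.2 ⟨hvp, hvL⟩
      · exact Finset.mem_erase.2 ⟨hwp, hwL⟩
    have hc := Finset.card_le_card hsub
    rw [Finset.card_erase_of_mem hpL, hc3] at hc
    have : ({u, v, w} : Finset S).card = 3 :=
      Finset.card_eq_three.2 ⟨u, v, w, h.1, h.2.1, h.2.2, rfl⟩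
    omega
  rcases htwo with rfl | rfl | rfl
  · exact hup (huniq i j hij p hpi hpj rfl u huXi hvXj)
  · exact hup (huniq i k hik p hpi hpk rfl u huXi hwXk)
  · exact hvp (huniq j k hjk p hpj hpk rfl v hvXj hwXk)

/-- The pairwise common vertices q^{i,j} of m distinct freely
contained K_n-graphs give an embedding of the Grassmannian G(I,2) into M: the
map {i,j} ↦ q^{i,j} is injective and carries lines of G(I,2) to lines of M. -/
theorem stmt_9 (n m : ℕ) (S : Type) [Fintype S] [DecidableEq S] (M : PSTS S)
    (hM : IsBinomial M (n + 1)) (X : Fin m → Finset S)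
    (hinj : Function.Injective X) (hcard : ∀ i, (X i).card = n)
    (hfree : ∀ i, FreelyContains M (X i))
    (q : Fin m → Fin m → S)
    (hq : ∀ i j, i ≠ j → X i ∩ X j = {q i j}) :
    (∀ i j k l : Fin m, i ≠ j → k ≠ l → q i j = q k l →
      ({i, j} : Finset (Fin m)) = {k, l}) ∧
    (∀ i j k : Fin m, i ≠ j → i ≠ k → j ≠ k →
      ({q i j, q i k, q j k} : Finset S) ∈ M.lines) := by
  have hmem : ∀ x y : Fin m, x ≠ y → q x y ∈ X x ∧ q x y ∈ X y := by
    intro x y h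
    have : q x y ∈ X x ∩ X y := by
      rw [hq x y h]; exact Finset.mem_singleton_self _
    exact Finset.mem_inter.1 this
  constructor
  · intro i j k l hij hkl hq'
    have hp : ∀ a ∈ ({i, j, k, l} : Finset (Fin m)), q i j ∈ X a := by
      intro a ha
      simp only [Finset.mem_insert, Finset.mem_singleton] at ha
      rcases ha with rfl | rfl | rfl | rfl
      · exact (hmem a j hij).1
      · exact (hmem i a hij).2
      · rw [hq']; exact (hmem a l hkl).1
      · rw [hq']; exact (hmem k a hkl).2
    have hT : ({i, j, k, l} : Finset (Fin m)).card ≤ 2 := by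
      by_contra h
      push_neg at h
      obtain ⟨a, b, c, ha, hb, hc, hab, hac, hbc⟩ := Finset.two_lt_card_iff.1 h
      exact no_common_three n m M hM X hinj hcard hfree q hq hab hac hbc
        (hp a ha) (hp b hb) (hp c hc)
    have h1 : ({i, j} : Finset (Fin m)) ⊆ {i, j, k, l} := by
      intro x hx; simp only [Finset.mem_insert, Finset.mem_singleton] at hx ⊢; tauto
    have h2 : ({k, l} : Finset (Fin m)) ⊆ {i, j, k, l} := by
      intro x hx; simp only [Finset.mem_insert, Finset.mem_singleton] at hx ⊢; tauto
    have e1 : ({i, j} : Finset (Fin m)) = {i, j, k, l} :=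
      Finset.eq_of_subset_of_card_le h1 (le_trans hT (by rw [Finset.card_pair hij]))
    have e2 : ({k, l} : Finset (Fin m)) = {i, j, k, l} :=
      Finset.eq_of_subset_of_card_le h2 (le_trans hT (by rw [Finset.card_pair hkl]))
    exact e1.trans e2.symm
  · intro i j k hij hik hjk
    set p := q i j with hp
    set r := q i k with hr
    set s := q j k with hs
    have hpi : p ∈ X i := (hmem i j hij).1
    have hpj : p ∈ X j := (hmem i j hij).2
    have hri : r ∈ X i := (hmem i k hik).1
    have hrk : r ∈ X k := (hmem i k hik).2
    have hsj : s ∈ X j := (hmem j k hjk).1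
    have hsk : s ∈ X k := (hmem j k hjk).2
    have hpr : p ≠ r := by
      intro h
      exact no_common_three n m M hM X hinj hcard hfree q hq hij hik hjk
        hpi hpj (h ▸ hrk)
    obtain ⟨L, hL, hpL, hrL, hcuti⟩ := (hfree i).1 p hpi r hri hpr
    have hc3 := M.card3 L hL
    -- the third point of L
    have hone : (L \ {p, r}).card = 1 := by
      rw [Finset.card_sdiff_of_subset (by
        intro x hx
        simp only [Finset.mem_insert, Finset.mem_singleton] at hx
        rcases hx with rfl | rfl
        · exact hpL
        · exact hrL), hc3, Finset.card_pair hpr]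
    obtain ⟨t, ht⟩ := Finset.card_eq_one.1 hone
    have htL : t ∈ L := by
      have : t ∈ L \ {p, r} := by rw [ht]; exact Finset.mem_singleton_self _
      exact (Finset.mem_sdiff.1 this).1
    have htp : t ≠ p := by
      have : t ∈ L \ {p, r} := by rw [ht]; exact Finset.mem_singleton_self _
      have := (Finset.mem_sdiff.1 this).2
      simp only [Finset.mem_insert, Finset.mem_singleton] at this
      tauto
    have htr : t ≠ r := by
      have : t ∈ L \ {p, r} := by rw [ht]; exact Finset.mem_singleton_self _
      have := (Finset.mem_sdiff.1 this).2
      simp only [Finset.mem_insert, Finset.mem_singleton] at this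
      tauto
    have hLeq : L = {p, r, t} := by
      refine (Finset.eq_of_subset_of_card_le ?_ ?_).symm
      · intro x hx
        simp only [Finset.mem_insert, Finset.mem_singleton] at hx
        rcases hx with rfl | rfl | rfl
        · exact hpL
        · exact hrL
        · exact htL
      · rw [hc3]
        have h3 : ({p, r, t} : Finset S).card = 3 :=
          Finset.card_eq_three.2 ⟨p, r, t, hpr, fun h => htp h.symm,
            fun h => htr h.symm, rfl⟩
        omega
    -- t belongs to X j
    have hrj : r ∉ X j := by
      intro h
      exact no_common_three n m M hM X hinj hcard hfree q hq hij hik hjk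
        hri h hrk
    have hpk : p ∉ X k := by
      intro h
      exact no_common_three n m M hM X hinj hcard hfree q hq hij hik hjk
        hpi hpj h
    have htXj : t ∈ X j := by
      have hcutj := lineThroughVertex M n hM (X j) (hcard j) (hfree j) p hpj L hL hpL
      have hne : ((L ∩ X j).erase p).Nonempty := by
        rw [← Finset.card_pos, Finset.card_erase_of_mem
          (Finset.mem_inter.2 ⟨hpL, hpj⟩), hcutj]
        omega
      obtain ⟨u, hu⟩ := hne
      have hu' := Finset.mem_of_mem_erase hu
      have huL := (Finset.mem_inter.1 hu').1
      have huXj := (Finset.mem_inter.1 hu').2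
      have hupne := Finset.ne_of_mem_erase hu
      rw [hLeq] at huL
      simp only [Finset.mem_insert, Finset.mem_singleton] at huL
      rcases huL with rfl | rfl | rfl
      · exact absurd rfl hupne
      · exact absurd huXj hrj
      · exact huXj
    have htXk : t ∈ X k := by
      have hcutk := lineThroughVertex M n hM (X k) (hcard k) (hfree k) r hrk L hL hrL
      have hne : ((L ∩ X k).erase r).Nonempty := by
        rw [← Finset.card_pos, Finset.card_erase_of_mem
          (Finset.mem_inter.2 ⟨hrL, hrk⟩), hcutk]
        omega
      obtain ⟨u, hu⟩ := hne
      have hu' := Finset.mem_of_mem_erase hu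
      have huL := (Finset.mem_inter.1 hu').1
      have huXk := (Finset.mem_inter.1 hu').2
      have hurne := Finset.ne_of_mem_erase hu
      rw [hLeq] at huL
      simp only [Finset.mem_insert, Finset.mem_singleton] at huL
      rcases huL with rfl | rfl | rfl
      · exact absurd huXk hpk
      · exact absurd rfl hurne
      · exact huXk
    have hts : t = s := by
      have : t ∈ X j ∩ X k := Finset.mem_inter.2 ⟨htXj, htXk⟩
      rw [hq j k hjk] at this
      exact Finset.mem_singleton.1 this
    rw [← hts, ← hLeq]
    exact hL
end

section
/- A binomial B(n+1)-configuration freely contains at most n+1 distinct complete K_n-graphs. -/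
open Finset

-- Lemma D
lemma every_line_is_side {S : Type} [Fintype S] [DecidableEq S] {M : PSTS S} {n : ℕ}
    (hM : IsBinomial M (n + 1)) {Y : Finset S} (hc : Y.card = n)
    (hf : FreelyContains M Y) {p : S} (hp : p ∈ Y) {L : Finset S}
    (hL : L ∈ M.lines) (hpL : p ∈ L) : (L ∩ Y).card = 2 := by
  classical
  set T : Finset (Finset S) := M.lines.filter (fun K => p ∈ K) with hT
  set T' : Finset (Finset S) := T.filter (fun K => (K ∩ Y).card = 2) with hT'
  have hT'sub : T' ⊆ T := filter_subset _ _
  have hTcard : T.card = n - 1 := by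
    have h := hM.2.2 p
    simpa [pointRank, hT] using h
  by_contra hne
  have hLT : L ∈ T := by simp [hT, hL, hpL]
  have hLT' : L ∉ T' := by simp [hT', hne]
  have hlt : T'.card < T.card := card_lt_card (ssubset_iff_of_subset hT'sub |>.2 ⟨L, hLT, hLT'⟩)
  have hch : ∀ a : S, ∃ K : Finset S, a ∈ Y.erase p → K ∈ T' ∧ a ∈ K := by
    intro a
    by_cases ha : a ∈ Y.erase p
    · obtain ⟨hap, haY⟩ := mem_erase.1 ha
      obtain ⟨K, hK, hpK, haK, hK2⟩ := hf.1 p hp a haY (Ne.symm hap)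
      exact ⟨K, fun _ => ⟨by simp [hT', hT, hK, hpK, hK2], haK⟩⟩
    · exact ⟨∅, fun h => absurd h ha⟩
  choose g hg using hch
  have hec : (Y.erase p).card = n - 1 := by rw [card_erase_of_mem hp, hc]
  have hlt2 : T'.card < (Y.erase p).card := by omega
  obtain ⟨a, ha, b, hb, hab, heq⟩ :=
    exists_ne_map_eq_of_card_lt_of_maps_to hlt2 (fun a ha => (hg a ha).1)
  -- p, a, b all in g a ∩ Y, distinct
  have hga := hg a ha
  have hgb := hg b hb
  have hgaT' := hga.1
  have h2 : (g a ∩ Y).card = 2 := (mem_filter.1 hgaT').2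
  have hpga : p ∈ g a := (mem_filter.1 ((mem_filter.1 hgaT').1)).2
  have hsub : ({p, a, b} : Finset S) ⊆ g a ∩ Y := by
    intro x hx
    simp only [mem_insert, mem_singleton] at hx
    rcases hx with rfl | rfl | rfl
    · exact mem_inter.2 ⟨hpga, hp⟩
    · exact mem_inter.2 ⟨hga.2, (mem_erase.1 ha).2⟩
    · exact mem_inter.2 ⟨heq ▸ hgb.2, (mem_erase.1 hb).2⟩
  have h3 : ({p, a, b} : Finset S).card = 3 := by
    rw [card_insert_of_notMem, card_insert_of_notMem, card_singleton]
    · simp [hab]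
    · simp only [mem_insert, mem_singleton]
      push_neg
      exact ⟨Ne.symm (mem_erase.1 ha).1, Ne.symm (mem_erase.1 hb).1⟩
  have := card_le_card hsub
  omega

-- Lemma A: two freely contained K_n's with two common points are equal
lemma eq_of_two_common {S : Type} [Fintype S] [DecidableEq S] {M : PSTS S} {n : ℕ}
    (hM : IsBinomial M (n + 1)) {Y Z : Finset S}
    (hcY : Y.card = n) (hcZ : Z.card = n)
    (hfY : FreelyContains M Y) (hfZ : FreelyContains M Z)
    {p q : S} (hpq : p ≠ q) (hpY : p ∈ Y) (hqY : q ∈ Y) (hpZ : p ∈ Z) (hqZ : q ∈ Z) :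
    Y = Z := by
  apply eq_of_subset_of_card_le _ (le_of_eq (hcY ▸ hcZ))
  intro a haY
  by_cases hap : a = p
  · exact hap ▸ hpZ
  by_cases haq : a = q
  · exact haq ▸ hqZ
  obtain ⟨L₁, hL₁, hpL₁, haL₁, h2L₁⟩ := hfY.1 p hpY a haY (Ne.symm hap)
  obtain ⟨L₂, hL₂, hqL₂, haL₂, h2L₂⟩ := hfY.1 q hqY a haY (Ne.symm haq)
  have hL₁₂ : L₁ ≠ L₂ := by
    rintro rfl
    have hsub : ({p, q, a} : Finset S) ⊆ L₁ ∩ Y := by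
      intro x hx
      simp only [mem_insert, mem_singleton] at hx
      rcases hx with rfl | rfl | rfl
      · exact mem_inter.2 ⟨hpL₁, hpY⟩
      · exact mem_inter.2 ⟨hqL₂, hqY⟩
      · exact mem_inter.2 ⟨haL₁, haY⟩
    have h3 : ({p, q, a} : Finset S).card = 3 := by
      rw [card_insert_of_notMem, card_insert_of_notMem, card_singleton]
      · simp [Ne.symm haq]
      · simp only [mem_insert, mem_singleton]
        push_neg
        exact ⟨hpq, Ne.symm hap⟩
    have := card_le_card hsub
    omega
  exact hfZ.2 L₁ L₂ ⟨hL₁, every_line_is_side hM hcZ hfZ hpZ hL₁ hpL₁⟩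
    ⟨hL₂, every_line_is_side hM hcZ hfZ hqZ hL₂ hqL₂⟩ hL₁₂ a haL₁ haL₂

-- Lemma C: no point is in three pairwise distinct freely contained K_n's (n ≥ 2)
lemma not_three {S : Type} [Fintype S] [DecidableEq S] {M : PSTS S} {n : ℕ} (hn : 2 ≤ n)
    (hM : IsBinomial M (n + 1)) {Y Z W : Finset S}
    (hcY : Y.card = n) (hcZ : Z.card = n) (hcW : W.card = n)
    (hfY : FreelyContains M Y) (hfZ : FreelyContains M Z) (hfW : FreelyContains M W)
    (hYZ : Y ≠ Z) (hYW : Y ≠ W) (hZW : Z ≠ W)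
    {p : S} (hpY : p ∈ Y) (hpZ : p ∈ Z) (hpW : p ∈ W) : False := by
  obtain ⟨a, haY, hap⟩ := exists_mem_ne (by omega : 1 < Y.card) p
  obtain ⟨L, hL, hpL, haL, h2Y⟩ := hfY.1 p hpY a haY (Ne.symm hap)
  have h2Z : (L ∩ Z).card = 2 := every_line_is_side hM hcZ hfZ hpZ hL hpL
  have h2W : (L ∩ W).card = 2 := every_line_is_side hM hcW hfW hpW hL hpL
  obtain ⟨b, hb, hbp⟩ := exists_mem_ne (by omega : 1 < (L ∩ Z).card) p
  obtain ⟨c, hc, hcp⟩ := exists_mem_ne (by omega : 1 < (L ∩ W).card) p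
  obtain ⟨hbL, hbZ⟩ := mem_inter.1 hb
  obtain ⟨hcL, hcW'⟩ := mem_inter.1 hc
  have hab : a ≠ b := fun h => hYZ (eq_of_two_common hM hcY hcZ hfY hfZ (Ne.symm hap) hpY haY hpZ (h ▸ hbZ))
  have hac : a ≠ c := fun h => hYW (eq_of_two_common hM hcY hcW hfY hfW (Ne.symm hap) hpY haY hpW (h ▸ hcW'))
  have hbc : b ≠ c := fun h => hZW (eq_of_two_common hM hcZ hcW hfZ hfW (Ne.symm hbp) hpZ hbZ hpW (h ▸ hcW'))
  have hsub : ({p, a, b, c} : Finset S) ⊆ L := by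
    intro x hx
    simp only [mem_insert, mem_singleton] at hx
    rcases hx with rfl | rfl | rfl | rfl
    exacts [hpL, haL, hbL, hcL]
  have h4 : ({p, a, b, c} : Finset S).card = 4 := by
    rw [card_insert_of_notMem, card_insert_of_notMem, card_insert_of_notMem, card_singleton]
    · simp [hbc]
    · simp only [mem_insert, mem_singleton]; push_neg; exact ⟨hab, hac⟩
    · simp only [mem_insert, mem_singleton]; push_neg
      exact ⟨Ne.symm hap, Ne.symm hbp, Ne.symm hcp⟩
  have h3 : L.card = 3 := M.card3 L hL
  have := card_le_card hsub
  omega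

/-- A binomial B(n+1)-configuration freely contains at most n+1
distinct complete K_n-graphs. -/
theorem stmt_10 (n m : ℕ) (S : Type) [Fintype S] [DecidableEq S] (M : PSTS S)
    (hM : IsBinomial M (n + 1)) (X : Fin m → Finset S)
    (hinj : Function.Injective X) (hcard : ∀ i, (X i).card = n)
    (hfree : ∀ i, FreelyContains M (X i)) :
    m ≤ n + 1 := by
  classical
  by_contra hcon
  push_neg at hcon
  -- small n cases: all X i are forced equal
  rcases lt_or_ge n 2 with hn | hn
  · have h2 : 2 ≤ m := by omega
    have i0 : Fin m := ⟨0, by omega⟩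
    have i1 : Fin m := ⟨1, by omega⟩
    have hne : (⟨0, by omega⟩ : Fin m) ≠ ⟨1, by omega⟩ := by
      intro h; simpa using congrArg Fin.val h
    interval_cases n
    · exact hne (hinj (by rw [card_eq_zero.1 (hcard _), card_eq_zero.1 (hcard _)]))
    · have hS : Fintype.card S = 1 := by simpa using hM.1
      have huniv : ∀ i : Fin m, X i = univ := fun i =>
        eq_univ_of_card _ (by rw [hcard, hS])
      exact hne (hinj (by rw [huniv, huniv]))
  -- main case
  have key : ∀ p : S, (univ.filter (fun i : Fin m => p ∈ X i)).card ≤ 2 := by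
    intro p
    by_contra h
    push_neg at h
    obtain ⟨i, hi, j, hj, k, hk, hij, hik, hjk⟩ := Finset.two_lt_card.1 h
    simp only [mem_filter, mem_univ, true_and] at hi hj hk
    exact not_three hn hM (hcard i) (hcard j) (hcard k) (hfree i) (hfree j) (hfree k)
      (fun h => hij (hinj h)) (fun h => hik (hinj h)) (fun h => hjk (hinj h)) hi hj hk
  have hsum : ∑ i : Fin m, (X i).card = ∑ p : S, (univ.filter (fun i : Fin m => p ∈ X i)).card := by
    calc ∑ i : Fin m, (X i).card
        = ∑ i : Fin m, ∑ p : S, (if p ∈ X i then 1 else 0) := by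
          refine Finset.sum_congr rfl fun i _ => ?_
          rw [Finset.sum_ite_mem, Finset.univ_inter, Finset.sum_const, smul_eq_mul, mul_one]
      _ = ∑ p : S, ∑ i : Fin m, (if p ∈ X i then 1 else 0) := Finset.sum_comm
      _ = ∑ p : S, (univ.filter (fun i : Fin m => p ∈ X i)).card := by
          simp only [Finset.card_filter]
  have h1 : ∑ i : Fin m, (X i).card = m * n := by
    simp [hcard, mul_comm]
  have h2 : ∑ p : S, (univ.filter (fun i : Fin m => p ∈ X i)).card ≤ 2 * Fintype.card S := by
    calc ∑ p : S, (univ.filter (fun i : Fin m => p ∈ X i)).card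
        ≤ ∑ _p : S, 2 := Finset.sum_le_sum (fun p _ => key p)
      _ = 2 * Fintype.card S := by simp [mul_comm]
  have hchoose : 2 * Nat.choose (n + 1) 2 = (n + 1) * n := by
    have hd : 2 ∣ (n + 1) * n := by
      rw [mul_comm]; exact (Nat.even_mul_succ_self n).two_dvd
    rw [Nat.choose_two_right, Nat.add_sub_cancel]
    exact Nat.mul_div_cancel' hd
  have hfin : m * n ≤ (n + 1) * n := by
    rw [← h1]
    calc ∑ i : Fin m, (X i).card = _ := hsum
      _ ≤ 2 * Fintype.card S := h2
      _ = (n + 1) * n := by rw [hM.1, hchoose]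
  have : m ≤ n + 1 := Nat.le_of_mul_le_mul_right hfin (by omega)
  omega
end
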